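/- arXiv:2203.08091 — 3 statements merged into one kernel-verified Lean document; each statement's English description precedes it below -/
import Mathlib

section
/- Suppose μ ∈ ℚ[[q]] has μ(0) = 0 and every q-coefficient of e^{−μ(q)/z}·φ(z,q) lies in ℚ[[z]] (i.e. has no negative powers of z), where e^{−μ/z} := ∑_{k≥0} (−μ)^k/(k!·z^k), a q-power series with coefficients in ℚ[z^{−1}]. Then the power series L := 1 + q·μ′(q) ∈ ℚ[[q]] satisfies L^n − D·q·L^m = 1. -/
/-- Formal derivative `d/dq` on `ℚ[[q]]`. -/
noncomputable def dQ (f : PowerSeries ℚ) : PowerSeries ℚ :=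
  PowerSeries.mk fun k => ((k + 1 : ℕ) : ℚ) * PowerSeries.coeff (R := ℚ) (k + 1) f

/-- The Laurent-series variable `z`. -/
noncomputable def Zl : LaurentSeries ℚ := HahnSeries.single (1 : ℤ) (1 : ℚ)

namespace Stmt1Aux

open PowerSeries

abbrev LF := LaurentSeries ℚ
abbrev PSF := PowerSeries LF

/-! ### Scalar-level regularity -/

def reg (x : LF) : Prop := ∀ j : ℤ, j < 0 → x.coeff j = 0

lemma reg_add {x y : LF} (hx : reg x) (hy : reg y) : reg (x + y) := by
  intro j hj; rw [HahnSeries.coeff_add, hx j hj, hy j hj, add_zero]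

lemma reg_mul {x y : LF} (hx : reg x) (hy : reg y) : reg (x * y) := by
  intro j hj
  by_contra h
  have hmem : j ∈ (x * y).support := h
  have := HahnSeries.support_mul_subset hmem
  obtain ⟨j1, hj1, j2, hj2, rfl⟩ := this
  simp only at hj
  have h1 : (0:ℤ) ≤ j1 := by
    by_contra h1; push_neg at h1; exact hj1 (hx j1 h1)
  have h2 : (0:ℤ) ≤ j2 := by
    by_contra h2; push_neg at h2; exact hj2 (hy j2 h2)
  omega

lemma reg_coeff_zero_mul {x y : LF} (hx : reg x) (hy : reg y) :
    (x * y).coeff 0 = x.coeff 0 * y.coeff 0 := by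
  by_cases hx0 : x.coeff 0 = 0
  · rw [hx0, zero_mul]
    by_contra h
    have hmem : (0:ℤ) ∈ (x * y).support := h
    obtain ⟨j1, hj1, j2, hj2, hsum⟩ := HahnSeries.support_mul_subset hmem
    simp only at hsum
    have h1 : (0:ℤ) < j1 := by
      rcases lt_trichotomy j1 0 with h | h | h
      · exact absurd (hx j1 h) hj1
      · exact absurd (h ▸ hx0) hj1
      · exact h
    have h2 : (0:ℤ) ≤ j2 := by
      by_contra h2; push_neg at h2; exact hj2 (hy j2 h2)
    omega
  · by_cases hy0 : y.coeff 0 = 0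
    · rw [hy0, mul_zero]
      by_contra h
      have hmem : (0:ℤ) ∈ (x * y).support := h
      obtain ⟨j1, hj1, j2, hj2, hsum⟩ := HahnSeries.support_mul_subset hmem
      simp only at hsum
      have h2 : (0:ℤ) < j2 := by
        rcases lt_trichotomy j2 0 with h | h | h
        · exact absurd (hy j2 h) hj2
        · exact absurd (h ▸ hy0) hj2
        · exact h
      have h1 : (0:ℤ) ≤ j1 := by
        by_contra h1; push_neg at h1; exact hj1 (hx j1 h1)
      omega
    · have hxne : x ≠ 0 := fun h => hx0 (by simp [h])
      have hyne : y ≠ 0 := fun h => hy0 (by simp [h])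
      have hxo : x.order = 0 := by
        apply le_antisymm (HahnSeries.order_le_of_coeff_ne_zero hx0)
        by_contra h
        push_neg at h
        exact (HahnSeries.coeff_order_eq_zero.not.2 hxne) (hx _ h)
      have hyo : y.order = 0 := by
        apply le_antisymm (HahnSeries.order_le_of_coeff_ne_zero hy0)
        by_contra h
        push_neg at h
        exact (HahnSeries.coeff_order_eq_zero.not.2 hyne) (hy _ h)
      have := HahnSeries.coeff_mul_order_add_order x y
      rw [hxo, hyo, add_zero] at this
      rw [this]
      simp [HahnSeries.leadingCoeff_eq, hxo, hyo]

lemma reg_C (a : ℚ) : reg (HahnSeries.C a : LF) := by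
  intro j hj
  rw [HahnSeries.C_apply, HahnSeries.coeff_single_of_ne (by omega)]

lemma reg_one : reg (1 : LF) := by
  have := reg_C 1
  rwa [map_one] at this

lemma reg_single_one (a : ℚ) : reg (HahnSeries.single (1:ℤ) a : LF) := by
  intro j hj
  rw [HahnSeries.coeff_single_of_ne (by omega)]

lemma reg_Zl : reg Zl := reg_single_one 1

open HahnSeries in
noncomputable def sgHom (a : ℤ) : ℚ →+ LF := single.addMonoidHom a

lemma sgHom_apply (a : ℤ) (x : ℚ) : sgHom a x = HahnSeries.single a x := rfl

lemma coeff_finsum {α : Type*} (s : Finset α) (f : α → LF) (j : ℤ) :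
    (∑ x ∈ s, f x).coeff j = ∑ x ∈ s, (f x).coeff j := by
  exact map_sum (HahnSeries.coeff.addMonoidHom j) f s

/-! ### dQ facts -/

lemma dQ_eq (f : PowerSeries ℚ) : dQ f = PowerSeries.derivativeFun f := by
  ext k
  rw [dQ, coeff_mk]
  change _ = coeff k (derivative ℚ f)
  rw [coeff_derivative]
  try push_cast
  try ring

lemma coeff_X_dQ (f : PowerSeries ℚ) (β : ℕ) :
    PowerSeries.coeff (R := ℚ) β (X * dQ f) = (β : ℚ) * PowerSeries.coeff (R := ℚ) β f := by
  cases β with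
  | zero =>
    simp [PowerSeries.coeff_zero_eq_constantCoeff, map_mul]
  | succ b =>
    rw [coeff_succ_X_mul, dQ, coeff_mk]
    try push_cast
    try ring

lemma dQ_pow (f : PowerSeries ℚ) (k : ℕ) :
    dQ (f ^ (k + 1)) = PowerSeries.C (R := ℚ) ((k:ℚ) + 1) * (f ^ k * dQ f) := by
  induction k with
  | zero => simp
  | succ j ih =>
    rw [pow_succ, dQ_eq, derivativeFun_mul, ← dQ_eq, ← dQ_eq, ih]
    have hC : (PowerSeries.C (R := ℚ)) ((j:ℚ) + 1 + 1) = PowerSeries.C (R := ℚ) ((j:ℚ)+1) + 1 := by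
      rw [map_add, map_one]
    push_cast
    rw [hC, smul_eq_mul, smul_eq_mul, pow_succ]
    ring

lemma X_dQ_pow (f : PowerSeries ℚ) (k : ℕ) :
    X * dQ (f ^ (k + 1)) = PowerSeries.C (R := ℚ) ((k:ℚ) + 1) * ((X * dQ f) * f ^ k) := by
  rw [dQ_pow]
  ring

lemma coeff_pow_eq_zero {f : PowerSeries ℚ} (hf : constantCoeff (R := ℚ) f = 0)
    {b k : ℕ} (h : b < k) : PowerSeries.coeff (R := ℚ) b (f ^ k) = 0 := by
  have hdvd : (X : PowerSeries ℚ) ^ k ∣ f ^ k :=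
    pow_dvd_pow_of_dvd (PowerSeries.X_dvd_iff.2 hf) k
  exact (PowerSeries.X_pow_dvd_iff.1 hdvd) b h

/-! ### Power-series-over-Laurent level -/

noncomputable def cmap (f : PSF) : PowerSeries ℚ :=
  PowerSeries.mk fun β => (PowerSeries.coeff (R := LF) β f).coeff 0

def Reg (f : PSF) : Prop := ∀ β, reg (PowerSeries.coeff (R := LF) β f)

noncomputable def th (f : PSF) : PSF :=
  PowerSeries.mk fun β => HahnSeries.single (1:ℤ) ((β:ℚ)) * PowerSeries.coeff (R := LF) β f

noncomputable def zCs : PSF := PowerSeries.C (R := LF) Zl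

noncomputable def lifts : PowerSeries ℚ →+* PSF :=
  PowerSeries.map (HahnSeries.C : ℚ →+* LF)

lemma coeff_th (f : PSF) (β : ℕ) :
    PowerSeries.coeff (R := LF) β (th f) = HahnSeries.single (1:ℤ) ((β:ℚ)) * PowerSeries.coeff (R := LF) β f :=
  coeff_mk _ _

lemma coeff_lifts (f : PowerSeries ℚ) (β : ℕ) :
    PowerSeries.coeff (R := LF) β (lifts f) = HahnSeries.C (PowerSeries.coeff (R := ℚ) β f) :=
  PowerSeries.coeff_map _ _ _

lemma th_mul (f g : PSF) : th (f * g) = th f * g + f * th g := by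
  apply PowerSeries.ext
  intro β
  rw [map_add, coeff_th, PowerSeries.coeff_mul, PowerSeries.coeff_mul, PowerSeries.coeff_mul,
    Finset.mul_sum, ← Finset.sum_add_distrib]
  apply Finset.sum_congr rfl
  intro p hp
  have hps : p.1 + p.2 = β := Finset.HasAntidiagonal.mem_antidiagonal.mp hp
  rw [coeff_th, coeff_th]
  have hsingle : (HahnSeries.single (1:ℤ) ((β:ℚ)) : LF) =
      HahnSeries.single (1:ℤ) ((p.1:ℚ)) + HahnSeries.single (1:ℤ) ((p.2:ℚ)) := by
    ext b
    rw [HahnSeries.coeff_add]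
    by_cases hb : b = (1:ℤ)
    · subst hb
      rw [HahnSeries.coeff_single_same, HahnSeries.coeff_single_same,
        HahnSeries.coeff_single_same, ← hps]
      push_cast
      ring
    · rw [HahnSeries.coeff_single_of_ne hb, HahnSeries.coeff_single_of_ne hb,
        HahnSeries.coeff_single_of_ne hb, add_zero]
  rw [hsingle]
  ring

lemma th_one : th (1 : PSF) = 0 := by
  apply PowerSeries.ext
  intro β
  rw [coeff_th, map_zero]
  cases β with
  | zero => rw [Nat.cast_zero, HahnSeries.single_eq_zero, zero_mul]
  | succ b =>
    rw [PowerSeries.coeff_one, if_neg (Nat.succ_ne_zero b), mul_zero]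

lemma Reg_th {f : PSF} (hf : Reg f) : Reg (th f) := by
  intro β
  rw [coeff_th]
  exact reg_mul (reg_single_one _) (hf β)

lemma cmap_th {f : PSF} (hf : Reg f) : cmap (th f) = 0 := by
  ext β
  rw [cmap, coeff_mk, coeff_th, map_zero]
  have h0 : ((0:ℤ)) = (-1) + 1 := by norm_num
  rw [h0, HahnSeries.coeff_single_mul_add, hf β (-1) (by norm_num), mul_zero]

lemma Reg_mul {f g : PSF} (hf : Reg f) (hg : Reg g) : Reg (f * g) := by
  intro β j hj
  rw [PowerSeries.coeff_mul, coeff_finsum]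
  apply Finset.sum_eq_zero
  intro p _
  exact reg_mul (hf p.1) (hg p.2) j hj

lemma cmap_mul {f g : PSF} (hf : Reg f) (hg : Reg g) :
    cmap (f * g) = cmap f * cmap g := by
  ext β
  rw [cmap, coeff_mk, PowerSeries.coeff_mul, PowerSeries.coeff_mul, coeff_finsum]
  apply Finset.sum_congr rfl
  intro p _
  rw [reg_coeff_zero_mul (hf p.1) (hg p.2)]
  rw [cmap, cmap, coeff_mk, coeff_mk]

lemma Reg_lifts (h : PowerSeries ℚ) : Reg (lifts h) := by
  intro β
  rw [coeff_lifts]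
  exact reg_C _

lemma cmap_lifts (h : PowerSeries ℚ) : cmap (lifts h) = h := by
  ext β
  rw [cmap, coeff_mk, coeff_lifts, HahnSeries.C_apply, HahnSeries.coeff_single_same]

lemma cmap_sub (f g : PSF) : cmap (f - g) = cmap f - cmap g := by
  ext β
  simp [cmap, map_sub, HahnSeries.coeff_sub]

lemma cmap_add (f g : PSF) : cmap (f + g) = cmap f + cmap g := by
  ext β
  simp [cmap, map_add, HahnSeries.coeff_add]

lemma single_one_nat (γ : ℕ) :
    (HahnSeries.single (1:ℤ) ((γ:ℚ)) : LF) = ((γ:ℕ) : LF) * Zl := by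
  rw [← map_natCast (HahnSeries.C : ℚ →+* LF) γ, HahnSeries.C_apply, Zl,
    HahnSeries.single_mul_single, zero_add, mul_one]

lemma Reg_natCast (a : ℕ) : Reg ((a:ℕ) : PSF) := by
  rw [← map_natCast lifts a]; exact Reg_lifts _

lemma cmap_natCast (a : ℕ) : cmap ((a:ℕ) : PSF) = ((a:ℕ) : PowerSeries ℚ) := by
  rw [← map_natCast lifts a, cmap_lifts]

lemma cmap_X_mul (f : PSF) : cmap (X * f) = X * cmap f := by
  ext β
  cases β with
  | zero => simp [cmap, map_mul]
  | succ b => simp [cmap, coeff_succ_X_mul]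

lemma Reg_X_mul {f : PSF} (hf : Reg f) : Reg (X * f) := by
  intro β
  cases β with
  | zero =>
    intro j hj
    rw [PowerSeries.coeff_zero_eq_constantCoeff, map_mul]
    simp
  | succ b =>
    rw [coeff_succ_X_mul]
    exact hf b

lemma Reg_zCs_mul {f : PSF} (hf : Reg f) : Reg (zCs * f) := by
  intro β
  rw [zCs, coeff_C_mul]
  exact reg_mul reg_Zl (hf β)

lemma cmap_zCs_mul {f : PSF} (hf : Reg f) : cmap (zCs * f) = 0 := by
  ext β
  rw [cmap, coeff_mk, zCs, coeff_C_mul, Zl, map_zero]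
  have h0 : ((0:ℤ)) = (-1) + 1 := by norm_num
  rw [h0, HahnSeries.coeff_single_mul_add, hf β (-1) (by norm_num), mul_zero]

/-! ### the operators -/

noncomputable def Topp : PSF → PSF := fun f => f + th f

noncomputable def Sopp (Λ : PSF) : PSF → PSF := fun f => Λ * f + th f

noncomputable def FT (a c : ℕ) : PSF → PSF :=
  fun f => (a : PSF) * Topp f + (c : PSF) * (zCs * f)

noncomputable def FS (Λ : PSF) (a c : ℕ) : PSF → PSF :=
  fun f => (a : PSF) * Sopp Λ f + (c : PSF) * (zCs * f)

noncomputable def eig (a c : ℕ) (β : ℕ) : LF :=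
  (a : LF) * (1 + HahnSeries.single (1:ℤ) ((β:ℚ))) + (c : LF) * Zl

lemma Topp_apply (f : PSF) : Topp f = f + th f := rfl

lemma Sopp_apply (Λ : PSF) (f : PSF) : Sopp Λ f = Λ * f + th f := rfl

lemma FT_apply (a c : ℕ) (f : PSF) :
    FT a c f = (a : PSF) * Topp f + (c : PSF) * (zCs * f) := rfl

lemma FS_apply (Λ : PSF) (a c : ℕ) (f : PSF) :
    FS Λ a c f = (a : PSF) * Sopp Λ f + (c : PSF) * (zCs * f) := rfl

lemma coeff_Topp (f : PSF) (β : ℕ) :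
    PowerSeries.coeff (R := LF) β (Topp f) =
      (1 + HahnSeries.single (1:ℤ) ((β:ℚ))) * PowerSeries.coeff (R := LF) β f := by
  rw [Topp_apply, map_add, coeff_th]; ring

lemma coeff_Topp_iter (f : PSF) (j β : ℕ) :
    PowerSeries.coeff (R := LF) β (Topp^[j] f) =
      (1 + HahnSeries.single (1:ℤ) ((β:ℚ)))^j * PowerSeries.coeff (R := LF) β f := by
  induction j with
  | zero => simp
  | succ i ih =>
    rw [Function.iterate_succ_apply', coeff_Topp, ih, pow_succ]
    ring

lemma coeff_natCast_mul (a : ℕ) (f : PSF) (β : ℕ) :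
    PowerSeries.coeff (R := LF) β ((a : PSF) * f) = (a : LF) * PowerSeries.coeff (R := LF) β f := by
  rw [← map_natCast (PowerSeries.C (R := LF)) a, coeff_C_mul]

lemma coeff_FT (a c : ℕ) (f : PSF) (β : ℕ) :
    PowerSeries.coeff (R := LF) β (FT a c f) = eig a c β * PowerSeries.coeff (R := LF) β f := by
  rw [FT_apply, map_add, coeff_natCast_mul, coeff_natCast_mul, coeff_Topp, zCs, coeff_C_mul, eig]
  ring

/-! ### the nonvanishing lemma -/

lemma coeff_one_pow_aux (a : ℚ) (N : ℕ) :
    PowerSeries.coeff (R := ℚ) 1 ((1 + PowerSeries.C (R := ℚ) a * X) ^ N) = N * a := by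
  induction N with
  | zero =>
    rw [pow_zero, PowerSeries.coeff_one, if_neg one_ne_zero, Nat.cast_zero, zero_mul]
  | succ M ih =>
    rw [pow_succ]
    have hexp : (1 + PowerSeries.C (R := ℚ) a * X) ^ M * (1 + PowerSeries.C (R := ℚ) a * X)
        = (1 + PowerSeries.C (R := ℚ) a * X) ^ M
          + PowerSeries.C (R := ℚ) a * ((1 + PowerSeries.C (R := ℚ) a * X) ^ M * X) := by
      ring
    have hconst : PowerSeries.coeff (R := ℚ) 0 ((1 + PowerSeries.C (R := ℚ) a * X) ^ M) = 1 := by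
      rw [PowerSeries.coeff_zero_eq_constantCoeff, map_pow]
      simp
    have h1 : (1:ℕ) = 0 + 1 := rfl
    rw [hexp, map_add, ih, coeff_C_mul, h1, coeff_succ_mul_X, hconst, mul_one]
    push_cast
    ring

lemma Bfun_ne_zero {N : ℕ} (hN : 0 < N) (c : ℕ) (hc : 0 < c) :
    (1 + ((c:ℕ) : LF) * Zl) ^ N - 1 ≠ 0 := by
  intro h
  have himg : (HahnSeries.ofPowerSeries ℤ ℚ) ((1 + PowerSeries.C (R := ℚ) (c:ℚ) * X) ^ N - 1) =
      (1 + ((c:ℕ) : LF) * Zl) ^ N - 1 := by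
    rw [map_sub, map_one, map_pow, map_add, map_one, map_mul]
    rw [HahnSeries.ofPowerSeries_C, HahnSeries.ofPowerSeries_X]
    rw [map_natCast (HahnSeries.C : ℚ →+* LF) c]
    rfl
  rw [h] at himg
  have hzero : ((1 + PowerSeries.C (R := ℚ) (c:ℚ) * X) ^ N - 1 : PowerSeries ℚ) = 0 := by
    apply HahnSeries.ofPowerSeries_injective (Γ := ℤ) (R := ℚ)
    rw [himg, map_zero]
  have := congrArg (PowerSeries.coeff (R := ℚ) 1) hzero
  rw [map_sub, coeff_one_pow_aux, PowerSeries.coeff_one, if_neg one_ne_zero, map_zero,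
    sub_zero] at this
  have hN' : (N:ℚ) ≠ 0 := Nat.cast_ne_zero.mpr hN.ne'
  have hc' : (c:ℚ) ≠ 0 := Nat.cast_ne_zero.mpr hc.ne'
  exact (mul_ne_zero hN' hc') this

/-! ### the key scalar identity and `th E` -/

lemma scalar_key (μ : PowerSeries ℚ) (β i : ℕ) :
    (β:ℚ) * (PowerSeries.coeff (R := ℚ) β ((-μ)^(i+1)) / (Nat.factorial (i+1) : ℚ))
    = -∑ p ∈ Finset.HasAntidiagonal.antidiagonal β,
        (p.1:ℚ) * PowerSeries.coeff (R := ℚ) p.1 μ *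
          (PowerSeries.coeff (R := ℚ) p.2 ((-μ)^i) / (Nat.factorial i : ℚ)) := by
  have h1 : PowerSeries.coeff (R := ℚ) β ((X * dQ (-μ)) * (-μ)^i)
      = ∑ p ∈ Finset.HasAntidiagonal.antidiagonal β,
          (p.1:ℚ) * PowerSeries.coeff (R := ℚ) p.1 (-μ) * PowerSeries.coeff (R := ℚ) p.2 ((-μ)^i) := by
    rw [PowerSeries.coeff_mul]
    apply Finset.sum_congr rfl
    intro p _
    rw [coeff_X_dQ]
  have h2 : (β:ℚ) * PowerSeries.coeff (R := ℚ) β ((-μ)^(i+1))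
      = ((i:ℚ)+1) * PowerSeries.coeff (R := ℚ) β ((X * dQ (-μ)) * (-μ)^i) := by
    have h3 := congrArg (PowerSeries.coeff (R := ℚ) β) (X_dQ_pow (-μ) i)
    rw [coeff_X_dQ, PowerSeries.coeff_C_mul] at h3
    exact h3
  have hfac : (Nat.factorial (i+1) : ℚ) = ((i:ℚ)+1) * (Nat.factorial i : ℚ) := by
    rw [Nat.factorial_succ]; push_cast; ring
  have hne : ((i:ℚ)+1) ≠ 0 := by positivity
  have hRHSeq : -∑ p ∈ Finset.HasAntidiagonal.antidiagonal β,
        (p.1:ℚ) * PowerSeries.coeff (R := ℚ) p.1 μ *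
          (PowerSeries.coeff (R := ℚ) p.2 ((-μ)^i) / (Nat.factorial i : ℚ))
      = (∑ p ∈ Finset.HasAntidiagonal.antidiagonal β,
          (p.1:ℚ) * PowerSeries.coeff (R := ℚ) p.1 (-μ) * PowerSeries.coeff (R := ℚ) p.2 ((-μ)^i))
            / (Nat.factorial i : ℚ) := by
    rw [Finset.sum_div, ← Finset.sum_neg_distrib]
    apply Finset.sum_congr rfl
    intro p _
    rw [map_neg]
    ring
  rw [hRHSeq, ← h1, ← mul_div_assoc, h2, hfac, mul_div_mul_left _ _ hne]

lemma theta_E (μ : PowerSeries ℚ) (hμ0 : PowerSeries.constantCoeff (R := ℚ) μ = 0) (E : PSF)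
    (hE : ∀ β : ℕ, PowerSeries.coeff (R := LF) β E =
      ∑ k ∈ Finset.range (β + 1),
        HahnSeries.single (-(k : ℤ))
          (PowerSeries.coeff (R := ℚ) β ((-μ) ^ k) / (Nat.factorial k : ℚ))) :
    th E = -(lifts (X * dQ μ) * E) := by
  have hν0 : PowerSeries.constantCoeff (R := ℚ) (-μ) = 0 := by rw [map_neg, hμ0, neg_zero]
  apply PowerSeries.ext
  intro β
  rw [coeff_th, hE β, map_neg, PowerSeries.coeff_mul, Finset.mul_sum]
  have hLHS : ∀ k ∈ Finset.range (β+1),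
      HahnSeries.single (1:ℤ) ((β:ℚ)) *
        HahnSeries.single (-(k:ℤ)) (PowerSeries.coeff (R := ℚ) β ((-μ)^k) / (Nat.factorial k : ℚ))
      = HahnSeries.single ((1:ℤ) + -(k:ℤ))
          ((β:ℚ) * (PowerSeries.coeff (R := ℚ) β ((-μ)^k) / (Nat.factorial k : ℚ))) := by
    intro k _
    rw [HahnSeries.single_mul_single]
  rw [Finset.sum_congr rfl hLHS]
  have hRHS : ∀ p ∈ Finset.HasAntidiagonal.antidiagonal β,
      PowerSeries.coeff (R := LF) p.1 (lifts (X * dQ μ)) * PowerSeries.coeff (R := LF) p.2 E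
      = ∑ k ∈ Finset.range (β+1),
          HahnSeries.single (-(k:ℤ))
            ((p.1:ℚ) * PowerSeries.coeff (R := ℚ) p.1 μ *
              (PowerSeries.coeff (R := ℚ) p.2 ((-μ)^k) / (Nat.factorial k : ℚ))) := by
    intro p hp
    have hp2 : p.2 ≤ β := by
      have := Finset.HasAntidiagonal.mem_antidiagonal.mp hp; omega
    rw [coeff_lifts, coeff_X_dQ, hE p.2, Finset.mul_sum]
    have hterm : ∀ k ∈ Finset.range (p.2+1),
        HahnSeries.C ((p.1:ℚ) * PowerSeries.coeff (R := ℚ) p.1 μ) *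
          HahnSeries.single (-(k:ℤ))
            (PowerSeries.coeff (R := ℚ) p.2 ((-μ)^k) / (Nat.factorial k : ℚ))
        = HahnSeries.single (-(k:ℤ))
            ((p.1:ℚ) * PowerSeries.coeff (R := ℚ) p.1 μ *
              (PowerSeries.coeff (R := ℚ) p.2 ((-μ)^k) / (Nat.factorial k : ℚ))) := by
      intro k _
      rw [HahnSeries.C_apply, HahnSeries.single_mul_single, zero_add]
    rw [Finset.sum_congr rfl hterm]
    apply Finset.sum_subset
    · intro k hk
      rw [Finset.mem_range] at hk ⊢
      omega
    · intro k _ hk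
      rw [Finset.mem_range, not_lt] at hk
      rw [coeff_pow_eq_zero hν0 (by omega), zero_div, mul_zero, HahnSeries.single_eq_zero]
  rw [Finset.sum_congr rfl hRHS, Finset.sum_comm]
  have hpush : ∀ k ∈ Finset.range (β+1),
      (∑ p ∈ Finset.HasAntidiagonal.antidiagonal β, HahnSeries.single (-(k:ℤ))
          ((p.1:ℚ) * PowerSeries.coeff (R := ℚ) p.1 μ *
            (PowerSeries.coeff (R := ℚ) p.2 ((-μ)^k) / (Nat.factorial k : ℚ))))
      = HahnSeries.single (-(k:ℤ))
          (∑ p ∈ Finset.HasAntidiagonal.antidiagonal β, (p.1:ℚ) * PowerSeries.coeff (R := ℚ) p.1 μ *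
            (PowerSeries.coeff (R := ℚ) p.2 ((-μ)^k) / (Nat.factorial k : ℚ))) := by
    intro k _
    have h := map_sum (sgHom (-(k:ℤ)))
      (fun p : ℕ × ℕ => (p.1:ℚ) * PowerSeries.coeff (R := ℚ) p.1 μ *
        (PowerSeries.coeff (R := ℚ) p.2 ((-μ)^k) / (Nat.factorial k : ℚ))) (Finset.HasAntidiagonal.antidiagonal β)
    simp only [sgHom_apply] at h
    exact h.symm
  rw [Finset.sum_congr rfl hpush]
  -- now massage both sides
  have hL2 : (∑ k ∈ Finset.range (β+1), HahnSeries.single ((1:ℤ) + -(k:ℤ))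
        ((β:ℚ) * (PowerSeries.coeff (R := ℚ) β ((-μ)^k) / (Nat.factorial k : ℚ))))
      = ∑ i ∈ Finset.range β, HahnSeries.single ((1:ℤ) + -((i+1:ℕ):ℤ))
        ((β:ℚ) * (PowerSeries.coeff (R := ℚ) β ((-μ)^(i+1)) / (Nat.factorial (i+1) : ℚ))) := by
    rw [Finset.sum_range_succ']
    have hz : ((β:ℚ) * (PowerSeries.coeff (R := ℚ) β ((-μ)^0) / (Nat.factorial 0 : ℚ))) = 0 := by
      cases β with
      | zero => rw [Nat.cast_zero, zero_mul]
      | succ b =>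
        rw [pow_zero, PowerSeries.coeff_one, if_neg (Nat.succ_ne_zero b)]
        rw [zero_div, mul_zero]
    rw [hz, HahnSeries.single_eq_zero, add_zero]
  have hR2 : -(∑ k ∈ Finset.range (β+1), HahnSeries.single (-(k:ℤ))
        (∑ p ∈ Finset.HasAntidiagonal.antidiagonal β, (p.1:ℚ) * PowerSeries.coeff (R := ℚ) p.1 μ *
          (PowerSeries.coeff (R := ℚ) p.2 ((-μ)^k) / (Nat.factorial k : ℚ))))
      = ∑ k ∈ Finset.range β, HahnSeries.single (-(k:ℤ))
          (-(∑ p ∈ Finset.HasAntidiagonal.antidiagonal β, (p.1:ℚ) * PowerSeries.coeff (R := ℚ) p.1 μ *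
            (PowerSeries.coeff (R := ℚ) p.2 ((-μ)^k) / (Nat.factorial k : ℚ)))) := by
    rw [Finset.sum_range_succ]
    have hTβ : (∑ p ∈ Finset.HasAntidiagonal.antidiagonal β, (p.1:ℚ) * PowerSeries.coeff (R := ℚ) p.1 μ *
        (PowerSeries.coeff (R := ℚ) p.2 ((-μ)^β) / (Nat.factorial β : ℚ))) = 0 := by
      apply Finset.sum_eq_zero
      intro p hp
      have hps : p.1 + p.2 = β := Finset.HasAntidiagonal.mem_antidiagonal.mp hp
      by_cases h : p.2 < β
      · rw [coeff_pow_eq_zero hν0 h, zero_div, mul_zero]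
      · have hp1 : p.1 = 0 := by omega
        rw [hp1, Nat.cast_zero, zero_mul, zero_mul]
    rw [hTβ, HahnSeries.single_eq_zero, add_zero, ← Finset.sum_neg_distrib]
    apply Finset.sum_congr rfl
    intro k _
    have h := map_neg (sgHom (-(k:ℤ)))
      (∑ p ∈ Finset.HasAntidiagonal.antidiagonal β, (p.1:ℚ) * PowerSeries.coeff (R := ℚ) p.1 μ *
        (PowerSeries.coeff (R := ℚ) p.2 ((-μ)^k) / (Nat.factorial k : ℚ)))
    simp only [sgHom_apply] at h
    exact h.symm
  rw [hL2, hR2]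
  apply Finset.sum_congr rfl
  intro i _
  have he : (1:ℤ) + -((i+1:ℕ):ℤ) = -(i:ℤ) := by push_cast; ring
  rw [he]
  congr 1
  rw [scalar_key μ β i]

/-! ### the product-of-operators bookkeeping -/

abbrev Mq := Function.End PSF × Function.End PSF × (ℕ → LF) × PowerSeries ℚ

def Pprop (Einv : PSF) (Q : Mq) : Prop :=
  (∀ g, Q.1 (Einv * g) = Einv * Q.2.1 g) ∧
  (∀ f β, PowerSeries.coeff (R := LF) β (Q.1 f) = Q.2.2.1 β * PowerSeries.coeff (R := LF) β f) ∧
  (∀ f, Reg f → Reg (Q.2.1 f) ∧ cmap (Q.2.1 f) = Q.2.2.2 * cmap f)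

lemma Pprop_one (Einv : PSF) : Pprop Einv 1 := by
  refine ⟨fun g => rfl, fun f β => ?_, fun f hf => ⟨hf, ?_⟩⟩
  · show PowerSeries.coeff (R := LF) β f = (1 : ℕ → LF) β * PowerSeries.coeff (R := LF) β f
    rw [Pi.one_apply, one_mul]
  · show cmap f = (1 : PowerSeries ℚ) * cmap f
    rw [one_mul]

lemma Pprop_mul (Einv : PSF) (Q Q' : Mq) (hQ : Pprop Einv Q) (hQ' : Pprop Einv Q') :
    Pprop Einv (Q * Q') := by
  obtain ⟨h1, h2, h3⟩ := hQ
  obtain ⟨h1', h2', h3'⟩ := hQ'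
  refine ⟨fun g => ?_, fun f β => ?_, fun f hf => ?_⟩
  · show Q.1 (Q'.1 (Einv * g)) = Einv * Q.2.1 (Q'.2.1 g)
    rw [h1' g, h1 (Q'.2.1 g)]
  · show PowerSeries.coeff (R := LF) β (Q.1 (Q'.1 f))
      = (Q.2.2.1 β * Q'.2.2.1 β) * PowerSeries.coeff (R := LF) β f
    rw [h2, h2']; ring
  · obtain ⟨hr', hc'⟩ := h3' f hf
    obtain ⟨hr, hc⟩ := h3 _ hr'
    refine ⟨hr, ?_⟩
    show cmap (Q.2.1 (Q'.2.1 f)) = (Q.2.2.2 * Q'.2.2.2) * cmap f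
    rw [hc, hc']; ring

lemma main (n r : ℕ) (hr : 1 ≤ r) (d : Fin r → ℕ) (hd : ∀ k, 2 ≤ d k)
    (m D : ℕ) (hm : m = ∑ k, d k) (hD : D = ∏ k, d k ^ d k) (hmn : m < n)
    (μ : PowerSeries ℚ) (hμ0 : PowerSeries.constantCoeff (R := ℚ) μ = 0)
    (φ : PowerSeries (LaurentSeries ℚ))
    (hφ : ∀ β : ℕ, PowerSeries.coeff (R := LaurentSeries ℚ) β φ =
      (∏ k : Fin r, ∏ i ∈ Finset.range (d k * β),
          ((d k : LaurentSeries ℚ) + ((i + 1 : ℕ) : LaurentSeries ℚ) * Zl)) /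
        ∏ j ∈ Finset.range β, ((1 + ((j + 1 : ℕ) : LaurentSeries ℚ) * Zl) ^ n - 1))
    (E : PowerSeries (LaurentSeries ℚ))
    (hE : ∀ β : ℕ, PowerSeries.coeff (R := LaurentSeries ℚ) β E =
      ∑ k ∈ Finset.range (β + 1),
        HahnSeries.single (-(k : ℤ)) (PowerSeries.coeff (R := ℚ) β ((-μ) ^ k) / (Nat.factorial k : ℚ)))
    (hreg : ∀ β : ℕ, ∀ j : ℤ, j < 0 →
      (PowerSeries.coeff (R := LaurentSeries ℚ) β (E * φ)).coeff j = 0)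
    (L : PowerSeries ℚ) (hL : L = 1 + PowerSeries.X * dQ μ) :
    L ^ n - (D : PowerSeries ℚ) * PowerSeries.X * L ^ m = 1 := by
  classical
  have hn : 0 < n := lt_of_le_of_lt (Nat.zero_le m) hmn
  set U : PSF := lifts (X * dQ μ) with hUdef
  have hthE : th E = -(U * E) := theta_E μ hμ0 E hE
  -- E is invertible
  have hE0 : PowerSeries.constantCoeff (R := LF) E = 1 := by
    have h0 := hE 0
    rw [Finset.sum_range_one, pow_zero, Nat.factorial_zero, Nat.cast_one, div_one,
      PowerSeries.coeff_one, if_pos rfl, Nat.cast_zero, neg_zero] at h0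
    rw [← PowerSeries.coeff_zero_eq_constantCoeff_apply, h0, ← HahnSeries.C_apply, map_one]
  set Einv : PSF := PowerSeries.invOfUnit E 1 with hEinvdef
  have hEinv : E * Einv = 1 := PowerSeries.mul_invOfUnit E 1 (by rw [hE0]; rfl)
  have hthEinv : th Einv = U * Einv := by
    have hexp := th_mul E Einv
    rw [hEinv, th_one, hthE] at hexp
    have h2 : E * th Einv = U := by
      linear_combination -hexp + U * hEinv
    linear_combination Einv * h2 - th Einv * hEinv
  set Λ : PSF := lifts L with hΛdef
  have hΛU : Λ = 1 + U := by rw [hΛdef, hL, map_add, map_one, hUdef]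
  -- conjugation
  have hconjT : ∀ g : PSF, Topp (Einv * g) = Einv * Sopp Λ g := by
    intro g
    rw [Topp_apply, Sopp_apply, th_mul, hthEinv, hΛU]
    ring
  have hconjTiter : ∀ (j : ℕ) (g : PSF), Topp^[j] (Einv * g) = Einv * (Sopp Λ)^[j] g := by
    intro j
    induction j with
    | zero => intro g; simp
    | succ i ih =>
      intro g
      calc Topp^[i+1] (Einv * g) = Topp (Topp^[i] (Einv * g)) :=
            Function.iterate_succ_apply' _ _ _
        _ = Topp (Einv * (Sopp Λ)^[i] g) := by rw [ih g]
        _ = Einv * Sopp Λ ((Sopp Λ)^[i] g) := hconjT _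
        _ = Einv * (Sopp Λ)^[i+1] g := by
            rw [Function.iterate_succ_apply' (Sopp Λ) i g]
  have hconjF : ∀ (a c : ℕ) (g : PSF), FT a c (Einv * g) = Einv * FS Λ a c g := by
    intro a c g
    rw [FT_apply, FS_apply, hconjT g]
    ring
  -- cmap behaviour
  have hΛreg : Reg Λ := Reg_lifts L
  have hcmapΛ : cmap Λ = L := cmap_lifts L
  have hS : ∀ f : PSF, Reg f → Reg (Sopp Λ f) ∧ cmap (Sopp Λ f) = L * cmap f := by
    intro f hf
    constructor
    · intro β
      rw [Sopp_apply, map_add]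
      exact reg_add (Reg_mul hΛreg hf β) (Reg_th hf β)
    · rw [Sopp_apply, cmap_add, cmap_mul hΛreg hf, hcmapΛ, cmap_th hf, add_zero]
  have hFS : ∀ (a c : ℕ) (f : PSF), Reg f →
      Reg (FS Λ a c f) ∧ cmap (FS Λ a c f) = ((a:ℕ) : PowerSeries ℚ) * L * cmap f := by
    intro a c f hf
    obtain ⟨hS1, hS2⟩ := hS f hf
    constructor
    · intro β
      rw [FS_apply, map_add]
      exact reg_add (Reg_mul (Reg_natCast a) hS1 β)
        (Reg_mul (Reg_natCast c) (Reg_zCs_mul hf) β)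
    · rw [FS_apply, cmap_add, cmap_mul (Reg_natCast a) hS1,
        cmap_mul (Reg_natCast c) (Reg_zCs_mul hf), cmap_zCs_mul hf, mul_zero, add_zero,
        cmap_natCast, hS2]
      ring
  -- the product of operators, built by explicit composition
  have inner : ∀ (a c : ℕ), ∃ A B : PSF → PSF,
      (∀ g, A (Einv * g) = Einv * B g) ∧
      (∀ f β, PowerSeries.coeff (R := LF) β (A f)
        = (∏ t ∈ Finset.range c, eig a (t+1) β) * PowerSeries.coeff (R := LF) β f) ∧
      (∀ f, Reg f → Reg (B f) ∧
        cmap (B f) = (((a:ℕ) : PowerSeries ℚ) * L)^c * cmap f) := by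
    intro a c
    induction c with
    | zero =>
      refine ⟨id, id, fun g => rfl, fun f β => ?_, fun f hf => ⟨hf, ?_⟩⟩
      · rw [Finset.range_zero, Finset.prod_empty, one_mul]; rfl
      · rw [pow_zero, one_mul]; rfl
    | succ c ih =>
      obtain ⟨A, B, hAB, hAe, hBc⟩ := ih
      refine ⟨fun f => FT a (c+1) (A f), fun f => FS Λ a (c+1) (B f),
        fun g => ?_, fun f β => ?_, fun f hf => ?_⟩
      · show FT a (c+1) (A (Einv * g)) = Einv * FS Λ a (c+1) (B g)
        rw [hAB g, hconjF a (c+1) (B g)]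
      · show PowerSeries.coeff (R := LF) β (FT a (c+1) (A f))
          = (∏ t ∈ Finset.range (c+1), eig a (t+1) β) * PowerSeries.coeff (R := LF) β f
        rw [coeff_FT, hAe, Finset.prod_range_succ]; ring
      · obtain ⟨hr1, hc1⟩ := hBc f hf
        obtain ⟨hr2, hc2⟩ := hFS a (c+1) (B f) hr1
        exact ⟨hr2, by rw [hc2, hc1, pow_succ]; ring⟩
  have outer : ∀ s : Finset (Fin r), ∃ A B : PSF → PSF,
      (∀ g, A (Einv * g) = Einv * B g) ∧
      (∀ f β, PowerSeries.coeff (R := LF) β (A f)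
        = (∏ k ∈ s, ∏ t ∈ Finset.range (d k), eig (d k) (t+1) β) *
            PowerSeries.coeff (R := LF) β f) ∧
      (∀ f, Reg f → Reg (B f) ∧
        cmap (B f) = (∏ k ∈ s, (((d k : ℕ) : PowerSeries ℚ) * L)^(d k)) * cmap f) := by
    intro s
    induction s using Finset.induction_on with
    | empty =>
      refine ⟨id, id, fun g => rfl, fun f β => ?_, fun f hf => ⟨hf, ?_⟩⟩
      · rw [Finset.prod_empty, one_mul]; rfl
      · rw [Finset.prod_empty, one_mul]; rfl
    | @insert k s hk ih =>
      obtain ⟨A, B, hAB, hAe, hBc⟩ := ih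
      obtain ⟨A', B', hAB', hAe', hBc'⟩ := inner (d k) (d k)
      refine ⟨fun f => A' (A f), fun f => B' (B f),
        fun g => ?_, fun f β => ?_, fun f hf => ?_⟩
      · show A' (A (Einv * g)) = Einv * B' (B g)
        rw [hAB g, hAB' (B g)]
      · show PowerSeries.coeff (R := LF) β (A' (A f))
          = (∏ k' ∈ insert k s, ∏ t ∈ Finset.range (d k'), eig (d k') (t+1) β) *
              PowerSeries.coeff (R := LF) β f
        rw [hAe', hAe, Finset.prod_insert hk]; ring
      · obtain ⟨hr1, hc1⟩ := hBc f hf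
        obtain ⟨hr2, hc2⟩ := hBc' (B f) hr1
        refine ⟨hr2, ?_⟩
        show cmap (B' (B f)) = (∏ k' ∈ insert k s, (((d k' : ℕ) : PowerSeries ℚ) * L)^(d k')) * cmap f
        rw [hc2, hc1, Finset.prod_insert hk]; ring
  obtain ⟨Aop, Bop, hAB, hAe, hBc⟩ := outer Finset.univ
  have hCval : (∏ k : Fin r, (((d k : ℕ) : PowerSeries ℚ) * L)^(d k))
      = (D : PowerSeries ℚ) * L ^ m := by
    rw [Finset.prod_congr rfl (fun k _ => mul_pow _ _ (d k)), Finset.prod_mul_distrib,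
      Finset.prod_pow_eq_pow_sum, ← hm, hD]
    push_cast
    ring
  -- the recursion for φ
  have hφrec : ∀ γ : ℕ,
      ((1 + ((γ+1 : ℕ) : LF) * Zl) ^ n - 1) * PowerSeries.coeff (R := LF) (γ+1) φ
      = (∏ k : Fin r, ∏ s ∈ Finset.range (d k), eig (d k) (s+1) γ) *
          PowerSeries.coeff (R := LF) γ φ := by
    intro γ
    rw [hφ γ, hφ (γ+1)]
    have hBne : ∀ j : ℕ, ((1 + ((j+1:ℕ):LF) * Zl) ^ n - 1) ≠ 0 := fun j =>
      Bfun_ne_zero hn (j+1) (Nat.succ_pos j)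
    have hPne : ∀ b : ℕ, (∏ j ∈ Finset.range b, ((1 + ((j + 1 : ℕ) : LF) * Zl) ^ n - 1)) ≠ 0 := by
      intro b
      apply Finset.prod_ne_zero_iff.mpr
      intro j _
      exact hBne j
    have hPsucc : (∏ j ∈ Finset.range (γ+1), ((1 + ((j + 1 : ℕ) : LF) * Zl) ^ n - 1))
        = (∏ j ∈ Finset.range γ, ((1 + ((j + 1 : ℕ) : LF) * Zl) ^ n - 1)) *
            ((1 + ((γ+1:ℕ):LF) * Zl) ^ n - 1) := Finset.prod_range_succ _ _
    have hNsucc : (∏ k : Fin r, ∏ i ∈ Finset.range (d k * (γ+1)),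
          ((d k : LF) + ((i + 1 : ℕ) : LF) * Zl))
        = (∏ k : Fin r, ∏ i ∈ Finset.range (d k * γ),
            ((d k : LF) + ((i + 1 : ℕ) : LF) * Zl)) *
          ∏ k : Fin r, ∏ s ∈ Finset.range (d k), eig (d k) (s+1) γ := by
      rw [← Finset.prod_mul_distrib]
      apply Finset.prod_congr rfl
      intro k _
      have hmul : d k * (γ+1) = d k * γ + d k := by ring
      rw [hmul, Finset.prod_range_add]
      congr 1
      apply Finset.prod_congr rfl
      intro s _
      rw [eig, single_one_nat γ]
      push_cast
      ring
    rw [hNsucc, hPsucc]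
    have hB := hBne γ
    have hP := hPne γ
    set Eg := ∏ k : Fin r, ∏ s ∈ Finset.range (d k), eig (d k) (s+1) γ with hEg
    set Nγ := ∏ k : Fin r, ∏ i ∈ Finset.range (d k * γ),
      ((d k : LF) + ((i + 1 : ℕ) : LF) * Zl) with hNγ
    set Pγ := ∏ j ∈ Finset.range γ, ((1 + ((j + 1 : ℕ) : LF) * Zl) ^ n - 1) with hPγ
    set Bγ := (1 + ((γ+1:ℕ):LF) * Zl) ^ n - 1 with hBγ
    rw [← div_div, mul_comm Bγ (Nγ * Eg / Pγ / Bγ), div_mul_cancel₀ _ hB,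
      mul_comm Eg (Nγ / Pγ), div_mul_eq_mul_div]
  -- the diagonal identity
  have hI : Topp^[n] φ - φ = X * (Aop φ) := by
    apply PowerSeries.ext
    intro β
    rw [map_sub, coeff_Topp_iter]
    cases β with
    | zero =>
      have hz : PowerSeries.coeff (R := LF) 0 (X * Aop φ) = 0 := by
        rw [PowerSeries.coeff_zero_eq_constantCoeff_apply, map_mul,
          PowerSeries.constantCoeff_X, zero_mul]
      rw [hz, Nat.cast_zero, HahnSeries.single_eq_zero, add_zero, one_pow, one_mul, sub_self]
    | succ γ =>
      rw [coeff_succ_X_mul, hAe φ γ, single_one_nat (γ+1)]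
      linear_combination hφrec γ
  -- assemble
  set W : PSF := E * φ with hWdef
  have hRegW : Reg W := fun β j hj => hreg β j hj
  have hφEinv : φ = Einv * W := by
    have : Einv * W = (E * Einv) * φ := by rw [hWdef]; ring
    rw [this, hEinv, one_mul]
  have hmain : (Sopp Λ)^[n] W - W = X * Bop W := by
    have h1 := hI
    rw [hφEinv, hconjTiter n W, hAB W] at h1
    linear_combination E * h1 - ((Sopp Λ)^[n] W - W - X * Bop W) * hEinv
  have hSiter : ∀ j : ℕ, Reg ((Sopp Λ)^[j] W) ∧ cmap ((Sopp Λ)^[j] W) = L^j * cmap W := by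
    intro j
    induction j with
    | zero =>
      refine ⟨hRegW, ?_⟩
      rw [Function.iterate_zero_apply, pow_zero, one_mul]
    | succ i ih =>
      obtain ⟨hr1, hc1⟩ := ih
      obtain ⟨hr2, hc2⟩ := hS _ hr1
      rw [Function.iterate_succ_apply']
      exact ⟨hr2, by rw [hc2, hc1, pow_succ]; ring⟩
  obtain ⟨hQreg, hQc3⟩ := hBc W hRegW
  have hcm := congrArg cmap hmain
  rw [cmap_sub, (hSiter n).2, cmap_X_mul, hQc3, hCval] at hcm
  -- conclusion
  set y : PowerSeries ℚ := cmap W with hydef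
  have hy0 : PowerSeries.constantCoeff (R := ℚ) y = 1 := by
    have hφ0 : PowerSeries.coeff (R := LF) 0 φ = 1 := by
      rw [hφ 0]
      simp
    have hW0 : PowerSeries.coeff (R := LF) 0 W = 1 := by
      rw [hWdef, PowerSeries.coeff_zero_eq_constantCoeff_apply, map_mul, hE0, one_mul,
        ← PowerSeries.coeff_zero_eq_constantCoeff_apply, hφ0]
    have hone : (1 : LF).coeff 0 = 1 := by
      rw [← map_one (HahnSeries.C : ℚ →+* LF), HahnSeries.C_apply, HahnSeries.coeff_single_same]
    rw [hydef, ← PowerSeries.coeff_zero_eq_constantCoeff_apply, cmap, coeff_mk, hW0, hone]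
  have hyne : y ≠ 0 := by
    intro h
    rw [h, map_zero] at hy0
    exact one_ne_zero hy0.symm
  have hkey : (L^n - 1 - (D : PowerSeries ℚ) * X * L^m) * y = 0 := by
    linear_combination hcm
  have hfinal : L^n - 1 - (D : PowerSeries ℚ) * X * L^m = 0 := by
    rcases mul_eq_zero.mp hkey with h | h
    · exact h
    · exact absurd h hyne
  linear_combination hfinal

end Stmt1Aux

theorem stmt1 (n r : ℕ) (hr : 1 ≤ r) (d : Fin r → ℕ) (hd : ∀ k, 2 ≤ d k)
    (m D : ℕ) (hm : m = ∑ k, d k) (hD : D = ∏ k, d k ^ d k) (hmn : m < n)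
    (μ : PowerSeries ℚ) (hμ0 : PowerSeries.constantCoeff (R := ℚ) μ = 0)
    -- the series φ(z,q)
    (φ : PowerSeries (LaurentSeries ℚ))
    (hφ : ∀ β : ℕ, PowerSeries.coeff (R := LaurentSeries ℚ) β φ =
      (∏ k : Fin r, ∏ i ∈ Finset.range (d k * β),
          ((d k : LaurentSeries ℚ) + ((i + 1 : ℕ) : LaurentSeries ℚ) * Zl)) /
        ∏ j ∈ Finset.range β, ((1 + ((j + 1 : ℕ) : LaurentSeries ℚ) * Zl) ^ n - 1))
    -- the series e^{-μ(q)/z}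
    (E : PowerSeries (LaurentSeries ℚ))
    (hE : ∀ β : ℕ, PowerSeries.coeff (R := LaurentSeries ℚ) β E =
      ∑ k ∈ Finset.range (β + 1),
        HahnSeries.single (-(k : ℤ)) (PowerSeries.coeff (R := ℚ) β ((-μ) ^ k) / (Nat.factorial k : ℚ)))
    -- regularizability: every q-coefficient of e^{-μ/z}·φ has no negative powers of z
    (hreg : ∀ β : ℕ, ∀ j : ℤ, j < 0 →
      (PowerSeries.coeff (R := LaurentSeries ℚ) β (E * φ)).coeff j = 0)
    (L : PowerSeries ℚ) (hL : L = 1 + PowerSeries.X * dQ μ) :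
    L ^ n - (D : PowerSeries ℚ) * PowerSeries.X * L ^ m = 1 := by
  exact Stmt1Aux.main n r hr d hd m D hm hD hmn μ hμ0 φ hφ E hE hreg L hL
end

section
/- Let ζ be a primitive n-th root of unity in the cyclotomic field K = ℚ(ζ), and let ev_ζ : ℚ[α_1,…,α_n][[q]] → K[[q]] be the evaluation sending α_k to ζ^k. Assume 0 ≤ p ≤ n−1. Then for all integers b ≥ 0 and 0 ≤ s ≤ p − b: (i) if ν does not divide b, then ev_ζ(𝒞̃_{p,s}^{(b)}) = 0; (ii) if b = νγ for some integer γ ≥ 0, then ev_ζ(𝒞̃_{p,s}^{(b)}) = c̃_{p,s}^{(γ)} · q^γ. -/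
/-- The coefficients `c_{p,l}^{(β)}`. -/
noncomputable def ccoef (n r : ℕ) (d : Fin r → ℕ) (p β : ℕ) (l : ℤ) : ℚ :=
  if l < 0 then 0 else
    PowerSeries.coeff l.toNat
      (((PowerSeries.X + (β : PowerSeries ℚ)) ^ p *
          ∏ k : Fin r, ∏ i ∈ Finset.range (d k * β),
            ((d k : PowerSeries ℚ) * PowerSeries.X + ((i + 1 : ℕ) : PowerSeries ℚ))) *
        (∏ j ∈ Finset.range β, (PowerSeries.X + ((j + 1 : ℕ) : PowerSeries ℚ)) ^ n)⁻¹)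

open PowerSeries Finset in
/-- numerator -/
noncomputable def stmtNumQ (r : ℕ) (d : Fin r → ℕ) (t β : ℕ) : PowerSeries ℚ :=
  (PowerSeries.X + (β : PowerSeries ℚ)) ^ t *
    ∏ k : Fin r, ∏ i ∈ Finset.range (d k * β),
      ((d k : PowerSeries ℚ) * PowerSeries.X + ((i + 1 : ℕ) : PowerSeries ℚ))

open PowerSeries Finset in
/-- denominator -/
noncomputable def stmtDenQ (n β : ℕ) : PowerSeries ℚ :=
  ∏ j ∈ Finset.range β, (PowerSeries.X + ((j + 1 : ℕ) : PowerSeries ℚ)) ^ n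

open PowerSeries Finset in
/-- the diagonal series -/
noncomputable def stmtG (n r : ℕ) (d : Fin r → ℕ) (t β : ℕ) : PowerSeries ℚ :=
  stmtNumQ r d t β * (stmtDenQ n β)⁻¹

lemma ccoef_natCast (n r : ℕ) (d : Fin r → ℕ) (t β s : ℕ) :
    ccoef n r d t β (s : ℤ) = PowerSeries.coeff s (stmtG n r d t β) := by
  simp [ccoef, stmtG, stmtNumQ, stmtDenQ]

lemma stmtDenQ_const (n β : ℕ) : PowerSeries.constantCoeff (stmtDenQ n β) ≠ 0 := by
  rw [stmtDenQ, map_prod]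
  apply Finset.prod_ne_zero_iff.2
  intro j hj
  have : PowerSeries.constantCoeff (PowerSeries.X + ((j + 1 : ℕ) : PowerSeries ℚ)) = ((j+1 : ℕ) : ℚ) := by
    simp
  rw [map_pow, this]
  positivity

lemma stmtG_mul_den (n r : ℕ) (d : Fin r → ℕ) (t β : ℕ) :
    stmtG n r d t β * stmtDenQ n β = stmtNumQ r d t β := by
  rw [stmtG, mul_assoc, PowerSeries.inv_mul_cancel _ (stmtDenQ_const n β), mul_one]

open PowerSeries in
/-- the diagonal substitution `X ↦ X·z` -/
noncomputable def stmtD (K : Type) [Field K] [CharZero K] :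
    PowerSeries ℚ →+* PowerSeries (Polynomial K) :=
  (PowerSeries.rescale (Polynomial.X : Polynomial K)).comp
    (PowerSeries.map ((Polynomial.C : K →+* Polynomial K).comp (Rat.castHom K)))

lemma stmtD_X (K : Type) [Field K] [CharZero K] :
    stmtD K PowerSeries.X =
      PowerSeries.X * PowerSeries.C Polynomial.X := by
  rw [stmtD, RingHom.comp_apply, PowerSeries.map_X]
  ext l
  simp only [PowerSeries.coeff_rescale, PowerSeries.coeff_X]
  rcases eq_or_ne l 1 with h | h <;>
    simp [h, PowerSeries.coeff_C_mul, PowerSeries.coeff_X, mul_comm]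

lemma stmtD_coeff (K : Type) [Field K] [CharZero K] (f : PowerSeries ℚ) (l : ℕ) :
    PowerSeries.coeff l (stmtD K f) =
      Polynomial.C ((PowerSeries.coeff l f : ℚ) : K) * Polynomial.X ^ l := by
  rw [stmtD, RingHom.comp_apply, PowerSeries.coeff_rescale, PowerSeries.coeff_map]
  rw [mul_comm]
  simp [Rat.castHom]

/-- product over the roots of unity -/
lemma stmt_rootprod {S : Type} [CommRing S] [IsDomain S] {n : ℕ} (hn : 0 < n)
    {ρ : S} (hρ : IsPrimitiveRoot ρ n) (x y : S) :
    ∏ k ∈ Finset.range n, (x - ρ ^ k * y) = x ^ n - y ^ n := by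
  have h := X_pow_sub_C_eq_prod hρ hn (rfl : y ^ n = y ^ n)
  have := congrArg (Polynomial.eval x) h
  simpa [Polynomial.eval_prod] using this.symm

lemma stmt_rootprod_succ {S : Type} [CommRing S] [IsDomain S] {n : ℕ} (hn : 0 < n)
    {ρ : S} (hρ : IsPrimitiveRoot ρ n) (x y : S) :
    ∏ k ∈ Finset.range n, (x - ρ ^ (k + 1) * y) = x ^ n - y ^ n := by
  have h : ∀ k, x - ρ ^ (k + 1) * y = x - ρ ^ k * (ρ * y) := by
    intro k; rw [pow_succ]; ring
  calc ∏ k ∈ Finset.range n, (x - ρ ^ (k + 1) * y)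
      = ∏ k ∈ Finset.range n, (x - ρ ^ k * (ρ * y)) := by
        exact Finset.prod_congr rfl fun k _ => h k
    _ = x ^ n - (ρ * y) ^ n := stmt_rootprod hn hρ x (ρ * y)
    _ = x ^ n - y ^ n := by rw [mul_pow, hρ.pow_eq_one, one_mul]

lemma stmt_dvd_prod_sub {R : Type} [CommRing R] (s : Finset ℕ) (f : ℕ → R) (c : R) :
    c ∣ (∏ j ∈ s, f j - ∏ j ∈ s, (f j - c)) := by
  classical
  induction s using Finset.induction with
  | empty => simp
  | insert a s' ha ih =>
    rw [Finset.prod_insert ha, Finset.prod_insert ha]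
    have : f a * ∏ j ∈ s', f j - (f a - c) * ∏ j ∈ s', (f j - c)
        = f a * (∏ j ∈ s', f j - ∏ j ∈ s', (f j - c)) + c * ∏ j ∈ s', (f j - c) := by ring
    rw [this]
    exact dvd_add (Dvd.dvd.mul_left ih _) (Dvd.intro _ rfl)
open PowerSeries Finset in
lemma stmt_master (n r ν : ℕ) (d : Fin r → ℕ) (K : Type) [Field K] [CharZero K]
    (ζ : K) (hζ : IsPrimitiveRoot ζ n) (hn : 0 < n) (t β : ℕ)
    (Rtβ : PowerSeries (Polynomial (MvPolynomial (Fin n) ℚ)))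
    (hR : (∏ j ∈ Finset.range β, ∏ k : Fin n,
          (PowerSeries.X * PowerSeries.C
              (Polynomial.X - Polynomial.C (MvPolynomial.X k)) +
            ((j + 1 : ℕ) : PowerSeries (Polynomial (MvPolynomial (Fin n) ℚ))))) * Rtβ =
      PowerSeries.C (Polynomial.X ^ r) *
        PowerSeries.X ^ (ν * β) *
        (PowerSeries.X * PowerSeries.C Polynomial.X +
          ((β : ℕ) : PowerSeries (Polynomial (MvPolynomial (Fin n) ℚ)))) ^ t *
        ∏ k : Fin r, ∏ i ∈ Finset.range (d k * β),
          ((d k : PowerSeries (Polynomial (MvPolynomial (Fin n) ℚ))) * PowerSeries.X *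
              PowerSeries.C Polynomial.X +
            ((i + 1 : ℕ) : PowerSeries (Polynomial (MvPolynomial (Fin n) ℚ)))))
    (S : ℕ) (hS : S < n) :
    PowerSeries.coeff S
        (PowerSeries.map (Polynomial.mapRingHom
          ((MvPolynomial.eval₂Hom (Rat.castHom K) fun k : Fin n => ζ ^ ((k : ℕ) + 1)) :
            MvPolynomial (Fin n) ℚ →+* K)) Rtβ) =
      PowerSeries.coeff S
        (PowerSeries.C (Polynomial.X ^ r) * PowerSeries.X ^ (ν * β) *
          stmtD K (stmtG n r d t β)) := by
  classical
  set ev : MvPolynomial (Fin n) ℚ →+* K :=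
    (MvPolynomial.eval₂Hom (Rat.castHom K) fun k : Fin n => ζ ^ ((k : ℕ) + 1)) with hev
  set φ0 : Polynomial (MvPolynomial (Fin n) ℚ) →+* Polynomial K :=
    Polynomial.mapRingHom ev with hφ0
  set Φ : PowerSeries (Polynomial (MvPolynomial (Fin n) ℚ)) →+* PowerSeries (Polynomial K) :=
    PowerSeries.map φ0 with hΦ
  set ρ : PowerSeries (Polynomial K) :=
    PowerSeries.C (Polynomial.C ζ) with hρdef
  have hρinj : Function.Injective
      ((PowerSeries.C (R := Polynomial K)).comp (Polynomial.C : K →+* Polynomial K)) := by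
    intro a b hab
    have := congrArg
      (fun f => Polynomial.coeff (PowerSeries.constantCoeff f) 0) hab
    simpa using this
  have hρ : IsPrimitiveRoot ρ n := hζ.map_of_injective hρinj
  set A : ℕ → PowerSeries (Polynomial K) := fun j =>
    PowerSeries.X * PowerSeries.C Polynomial.X +
      ((j + 1 : ℕ) : PowerSeries (Polynomial K)) with hA
  have hfac : ∀ (j : ℕ) (k : Fin n),
      Φ (PowerSeries.X * PowerSeries.C
            (Polynomial.X - Polynomial.C (MvPolynomial.X k)) +
          ((j + 1 : ℕ) : PowerSeries (Polynomial (MvPolynomial (Fin n) ℚ)))) =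
        A j - ρ ^ ((k : ℕ) + 1) * PowerSeries.X := by
    intro j k
    have h1 : φ0 (Polynomial.X - Polynomial.C (MvPolynomial.X k)) =
        Polynomial.X - Polynomial.C (ζ ^ ((k : ℕ) + 1)) := by
      simp [hφ0, hev]
    have h2 : ρ ^ ((k : ℕ) + 1) =
        PowerSeries.C (Polynomial.C (ζ ^ ((k : ℕ) + 1))) := by
      rw [hρdef, ← map_pow, ← map_pow]
    rw [hΦ, map_add, map_mul, PowerSeries.map_X, PowerSeries.map_C, map_natCast, h1, h2, hA]
    rw [map_sub]
    push_cast
    ring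
  have hL : Φ (∏ j ∈ Finset.range β, ∏ k : Fin n,
        (PowerSeries.X * PowerSeries.C
            (Polynomial.X - Polynomial.C (MvPolynomial.X k)) +
          ((j + 1 : ℕ) : PowerSeries (Polynomial (MvPolynomial (Fin n) ℚ))))) =
      ∏ j ∈ Finset.range β, (A j ^ n - PowerSeries.X ^ n) := by
    rw [map_prod]
    refine Finset.prod_congr rfl fun j _ => ?_
    rw [map_prod]
    have e1 : ∏ k : Fin n, Φ (PowerSeries.X * PowerSeries.C
            (Polynomial.X - Polynomial.C (MvPolynomial.X k)) +
          ((j + 1 : ℕ) : PowerSeries (Polynomial (MvPolynomial (Fin n) ℚ)))) =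
        ∏ k : Fin n, (A j - ρ ^ ((k : ℕ) + 1) * PowerSeries.X) :=
      Finset.prod_congr rfl fun k _ => hfac j k
    have e2 : ∏ k : Fin n, (A j - ρ ^ ((k : ℕ) + 1) * PowerSeries.X) =
        ∏ k ∈ Finset.range n, (A j - ρ ^ (k + 1) * PowerSeries.X) :=
      Fin.prod_univ_eq_prod_range (fun k => A j - ρ ^ (k + 1) * PowerSeries.X) n
    rw [e1, e2]
    exact stmt_rootprod_succ hn hρ _ _
  have hDnum : stmtD K (stmtNumQ r d t β) =
      (PowerSeries.X * PowerSeries.C Polynomial.X +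
          ((β : ℕ) : PowerSeries (Polynomial K))) ^ t *
        ∏ k : Fin r, ∏ i ∈ Finset.range (d k * β),
          ((d k : PowerSeries (Polynomial K)) * PowerSeries.X *
              PowerSeries.C Polynomial.X +
            ((i + 1 : ℕ) : PowerSeries (Polynomial K))) := by
    rw [stmtNumQ, map_mul, map_pow, map_add, stmtD_X, map_natCast, map_prod]
    congr 1
    refine Finset.prod_congr rfl fun k _ => ?_
    rw [map_prod]
    refine Finset.prod_congr rfl fun i _ => ?_
    rw [map_add, map_mul, map_natCast, stmtD_X, map_natCast, mul_assoc]
  have key : (∏ j ∈ Finset.range β, (A j ^ n - PowerSeries.X ^ n)) * Φ Rtβ =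
      PowerSeries.C (Polynomial.X ^ r) * PowerSeries.X ^ (ν * β) *
        stmtD K (stmtNumQ r d t β) := by
    have hmap := congrArg Φ hR
    rw [map_mul, hL] at hmap
    rw [hmap, hDnum]
    simp only [hΦ, map_mul, map_pow, map_prod, map_add, PowerSeries.map_X, PowerSeries.map_C,
      map_natCast, hφ0, Polynomial.coe_mapRingHom, Polynomial.map_X, Polynomial.map_pow]
    ring
  -- P := ∏ A j ^ n
  have hPD : (∏ j ∈ Finset.range β, A j ^ n) = stmtD K (stmtDenQ n β) := by
    rw [stmtDenQ, map_prod]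
    refine Finset.prod_congr rfl fun j _ => ?_
    rw [map_pow, map_add, stmtD_X, map_natCast]
  have hPunit : IsUnit (∏ j ∈ Finset.range β, A j ^ n) := by
    rw [PowerSeries.isUnit_iff_constantCoeff, map_prod]
    refine Finset.prod_induction _ IsUnit (fun a b => IsUnit.mul) isUnit_one fun j _ => ?_
    have hc : PowerSeries.constantCoeff (A j) = ((j + 1 : ℕ) : Polynomial K) := by
      simp [hA]
    rw [map_pow, hc]
    refine IsUnit.pow _ ?_
    rw [← Polynomial.C_eq_natCast]
    exact Polynomial.isUnit_C.mpr (by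
      exact isUnit_iff_ne_zero.mpr (Nat.cast_ne_zero.mpr (Nat.succ_ne_zero j)))
  have hPmain : (∏ j ∈ Finset.range β, A j ^ n) *
      (PowerSeries.C (Polynomial.X ^ r) * PowerSeries.X ^ (ν * β) *
        stmtD K (stmtG n r d t β)) =
      PowerSeries.C (Polynomial.X ^ r) * PowerSeries.X ^ (ν * β) *
        stmtD K (stmtNumQ r d t β) := by
    rw [hPD]
    have : stmtD K (stmtG n r d t β) * stmtD K (stmtDenQ n β) = stmtD K (stmtNumQ r d t β) := by
      rw [← map_mul, stmtG_mul_den]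
    rw [← this]
    ring
  have hdvd : (PowerSeries.X : PowerSeries (Polynomial K)) ^ n ∣
      (Φ Rtβ - PowerSeries.C (Polynomial.X ^ r) * PowerSeries.X ^ (ν * β) *
        stmtD K (stmtG n r d t β)) := by
    have h2 : (PowerSeries.X : PowerSeries (Polynomial K)) ^ n ∣
        ((∏ j ∈ Finset.range β, A j ^ n) -
          ∏ j ∈ Finset.range β, (A j ^ n - PowerSeries.X ^ n)) :=
      stmt_dvd_prod_sub _ _ _
    have h3 := h2.mul_right (Φ Rtβ)
    have h4 : ((∏ j ∈ Finset.range β, A j ^ n) -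
          ∏ j ∈ Finset.range β, (A j ^ n - PowerSeries.X ^ n)) * Φ Rtβ =
        (∏ j ∈ Finset.range β, A j ^ n) *
          (Φ Rtβ - PowerSeries.C (Polynomial.X ^ r) * PowerSeries.X ^ (ν * β) *
            stmtD K (stmtG n r d t β)) := by
      rw [sub_mul, mul_sub, hPmain, ← key]
    rw [h4] at h3
    exact hPunit.dvd_mul_left.mp h3
  have hz := (PowerSeries.X_pow_dvd_iff.mp hdvd) S hS
  rw [map_sub, sub_eq_zero] at hz
  exact hz
lemma stmt_main_coeff (n r ν : ℕ) (d : Fin r → ℕ) (K : Type) [Field K] [CharZero K]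
    (t β S y : ℕ) :
    Polynomial.coeff (PowerSeries.coeff S
        (PowerSeries.C (Polynomial.X ^ r) * PowerSeries.X ^ (ν * β) *
          stmtD K (stmtG n r d t β))) y =
      if ν * β ≤ S ∧ y = S - ν * β + r then
        ((PowerSeries.coeff (S - ν * β) (stmtG n r d t β) : ℚ) : K) else 0 := by
  have h1 : PowerSeries.C (Polynomial.X ^ r) * PowerSeries.X ^ (ν * β) *
      stmtD K (stmtG n r d t β) =
      (PowerSeries.C (Polynomial.X ^ r) * stmtD K (stmtG n r d t β)) *
        PowerSeries.X ^ (ν * β) := by ring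
  rw [h1, PowerSeries.coeff_mul_X_pow']
  by_cases h : ν * β ≤ S
  · rw [if_pos h]
    rw [PowerSeries.coeff_C_mul, stmtD_coeff]
    have h2 : Polynomial.X ^ r * (Polynomial.C ((PowerSeries.coeff (S - ν * β)
        (stmtG n r d t β) : ℚ) : K) * Polynomial.X ^ (S - ν * β)) =
        Polynomial.C ((PowerSeries.coeff (S - ν * β) (stmtG n r d t β) : ℚ) : K) *
          Polynomial.X ^ (S - ν * β + r) := by
      rw [pow_add]; ring
    rw [h2, Polynomial.coeff_C_mul, Polynomial.coeff_X_pow]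
    by_cases hy : y = S - ν * β + r
    · rw [if_pos hy, if_pos ⟨h, hy⟩, mul_one]
    · rw [if_neg hy, if_neg (by tauto), mul_zero]
  · rw [if_neg h, if_neg (by tauto), Polynomial.coeff_zero]
lemma stmt_evCc (n r ν : ℕ) (hν : 0 < ν) (d : Fin r → ℕ) (K : Type) [Field K] [CharZero K]
    (ζ : K) (hζ : IsPrimitiveRoot ζ n)
    (R : ℕ → ℕ → PowerSeries (Polynomial (MvPolynomial (Fin n) ℚ)))
    (hR : ∀ p β : ℕ,
      (∏ j ∈ Finset.range β, ∏ k : Fin n,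
          (PowerSeries.X * PowerSeries.C
              (Polynomial.X - Polynomial.C (MvPolynomial.X k)) +
            ((j + 1 : ℕ) : PowerSeries (Polynomial (MvPolynomial (Fin n) ℚ))))) * R p β =
      PowerSeries.C (Polynomial.X ^ r) *
        PowerSeries.X ^ (ν * β) *
        (PowerSeries.X * PowerSeries.C Polynomial.X +
          ((β : ℕ) : PowerSeries (Polynomial (MvPolynomial (Fin n) ℚ)))) ^ p *
        ∏ k : Fin r, ∏ i ∈ Finset.range (d k * β),
          ((d k : PowerSeries (Polynomial (MvPolynomial (Fin n) ℚ))) * PowerSeries.X *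
              PowerSeries.C Polynomial.X +
            ((i + 1 : ℕ) : PowerSeries (Polynomial (MvPolynomial (Fin n) ℚ)))))
    (Cc : ℕ → ℕ → ℕ → PowerSeries (MvPolynomial (Fin n) ℚ))
    (hCc : ∀ p s b : ℕ, Cc p s b = PowerSeries.mk fun β =>
      if b ≤ s + r then
        Polynomial.coeff (PowerSeries.coeff s (R p β))
          (s + r - b)
      else 0)
    (t s b : ℕ) (hb : s + b < n) :
    PowerSeries.map
        ((MvPolynomial.eval₂Hom (Rat.castHom K) fun k : Fin n => ζ ^ ((k : ℕ) + 1)) :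
          MvPolynomial (Fin n) ℚ →+* K)
        (Cc t (s + b) b) =
      if ν ∣ b then
        PowerSeries.C ((PowerSeries.coeff s (stmtG n r d t (b / ν)) : ℚ) : K) *
          PowerSeries.X ^ (b / ν)
      else 0 := by
  have hn : 0 < n := lt_of_le_of_lt (Nat.zero_le _) hb
  ext β
  rw [PowerSeries.coeff_map, hCc, PowerSeries.coeff_mk]
  have hble : b ≤ (s + b) + r := by omega
  rw [if_pos hble]
  have hcomm : (MvPolynomial.eval₂Hom (Rat.castHom K) fun k : Fin n => ζ ^ ((k : ℕ) + 1))
      (Polynomial.coeff (PowerSeries.coeff (s + b)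
        (R t β)) (s + b + r - b)) =
      Polynomial.coeff (PowerSeries.coeff (s + b)
        (PowerSeries.map (Polynomial.mapRingHom
          ((MvPolynomial.eval₂Hom (Rat.castHom K) fun k : Fin n => ζ ^ ((k : ℕ) + 1)) :
            MvPolynomial (Fin n) ℚ →+* K)) (R t β))) (s + b + r - b) := by
    rw [PowerSeries.coeff_map, Polynomial.coe_mapRingHom, Polynomial.coeff_map]
  rw [hcomm, stmt_master n r ν d K ζ hζ hn t β (R t β) (hR t β) (s + b) hb,
    stmt_main_coeff]
  have hsr : s + b + r - b = s + r := by omega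
  rw [hsr]
  by_cases hdvd : ν ∣ b
  · rw [if_pos hdvd]
    rw [PowerSeries.coeff_C_mul, PowerSeries.coeff_X_pow]
    by_cases hβ : β = b / ν
    · have hνβ : ν * β = b := by
        rw [hβ]; exact Nat.mul_div_cancel' hdvd
      have hcond : ν * β ≤ s + b ∧ s + r = s + b - ν * β + r := by omega
      rw [if_pos hcond, if_pos hβ, mul_one]
      have : s + b - ν * β = s := by omega
      rw [this, hβ]
    · have hνβ : ν * β ≠ b := fun h => hβ (by
        rw [← h, Nat.mul_div_cancel_left _ hν])
      have hcond : ¬ (ν * β ≤ s + b ∧ s + r = s + b - ν * β + r) := by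
        rintro ⟨h1, h2⟩
        exact hνβ (by omega)
      rw [if_neg hcond, if_neg hβ, mul_zero]
  · rw [if_neg hdvd]
    have hνβ : ν * β ≠ b := fun h => hdvd ⟨β, h.symm⟩
    have hcond : ¬ (ν * β ≤ s + b ∧ s + r = s + b - ν * β + r) := by
      rintro ⟨h1, h2⟩
      exact hνβ (by omega)
    rw [if_neg hcond, map_zero]
lemma stmt_sum_Icc {A : Type} [AddCommMonoid A] (M : ℕ) (g : ℤ → A) :
    ∑ k ∈ Finset.Icc (0 : ℤ) (M : ℤ), g k = ∑ t ∈ Finset.range (M + 1), g (t : ℤ) := by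
  refine Finset.sum_nbij' (fun k => k.toNat) (fun t => (t : ℤ)) ?_ ?_ ?_ ?_ ?_ <;>
    intros a ha <;> simp_all <;> omega
theorem stmt14 (n r : ℕ) (hr : 1 ≤ r) (d : Fin r → ℕ) (hd : ∀ k, 2 ≤ d k)
    (m D : ℕ) (hm : m = ∑ k, d k) (hD : D = ∏ k, d k ^ d k)
    (ν : ℕ) (hν : ν = n - m) (hmn : m < n)
    -- the rational coefficients c̃_{p,l}^{(β)}
    (ct : ℕ → ℤ → ℕ → ℚ)
    (hct0 : ∀ (p : ℕ) (l : ℤ), ct p l 0 = if l = (p : ℤ) then 1 else 0)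
    (hctz : ∀ (p : ℕ) (l : ℤ) (β : ℕ),
      (l < 0 ∨ (p : ℤ) - (ν : ℤ) * (β : ℤ) < l) → ct p l β = 0)
    (hctrec : ∀ (p : ℕ) (l : ℤ) (β : ℕ), 1 ≤ β → 0 ≤ l → l ≤ (p : ℤ) - (ν : ℤ) * (β : ℤ) →
      ct p l β = -∑ β₁ ∈ Finset.range β, ∑ k ∈ Finset.Icc (0 : ℤ) ((p : ℤ) - (ν : ℤ) * (β₁ : ℤ)),
        ct p k β₁ * ccoef n r d k.toNat (β - β₁) l)
    -- the series R_{p,β}(z,w) ∈ ℚ[α₁,…,α_n][z][[w]], characterized by clearing denominators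
    (R : ℕ → ℕ → PowerSeries (Polynomial (MvPolynomial (Fin n) ℚ)))
    (hR : ∀ p β : ℕ,
      (∏ j ∈ Finset.range β, ∏ k : Fin n,
          (PowerSeries.X * PowerSeries.C
              ((Polynomial.X - Polynomial.C (MvPolynomial.X k)) : Polynomial (MvPolynomial (Fin n) ℚ)) +
            ((j + 1 : ℕ) : PowerSeries (Polynomial (MvPolynomial (Fin n) ℚ))))) * R p β =
      PowerSeries.C ((Polynomial.X ^ r : Polynomial (MvPolynomial (Fin n) ℚ))) *
        PowerSeries.X ^ (ν * β) *
        (PowerSeries.X * PowerSeries.C (Polynomial.X : Polynomial (MvPolynomial (Fin n) ℚ)) +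
          ((β : ℕ) : PowerSeries (Polynomial (MvPolynomial (Fin n) ℚ)))) ^ p *
        ∏ k : Fin r, ∏ i ∈ Finset.range (d k * β),
          ((d k : PowerSeries (Polynomial (MvPolynomial (Fin n) ℚ))) * PowerSeries.X *
              PowerSeries.C (Polynomial.X : Polynomial (MvPolynomial (Fin n) ℚ)) +
            ((i + 1 : ℕ) : PowerSeries (Polynomial (MvPolynomial (Fin n) ℚ)))))
    -- 𝒞_{p,s}^{(b)} ∈ ℚ[α₁,…,α_n][[q]]: coefficient of w^s z^{s+r−b} in R_{p,β}
    (Cc : ℕ → ℕ → ℕ → PowerSeries (MvPolynomial (Fin n) ℚ))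
    (hCc : ∀ p s b : ℕ, Cc p s b = PowerSeries.mk fun β =>
      if b ≤ s + r then
        Polynomial.coeff (PowerSeries.coeff s (R p β))
          (s + r - b)
      else 0)
    -- 𝒞̃_{p,s}^{(b)}
    (Ct : ℕ → ℕ → ℕ → PowerSeries (MvPolynomial (Fin n) ℚ))
    (hCt0 : ∀ p s : ℕ, Ct p s 0 = if p = s then 1 else 0)
    (hCtz : ∀ p s b : ℕ, p < s + b → Ct p s b = 0)
    (hCtrec : ∀ p s b : ℕ, 1 ≤ b → s + b ≤ p →
      Ct p s b = -∑ b₁ ∈ Finset.range b, ∑ t ∈ Finset.range (p - b₁ + 1),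
        Ct p t b₁ * Cc t (s + b - b₁) (b - b₁))
    -- evaluation at the primitive n-th roots of unity: α_k ↦ ζ^k
    (K : Type) [Field K] [CharZero K] (ζ : K) (hζ : IsPrimitiveRoot ζ n)
    (p : ℕ) (hp : p < n) :
    ∀ b s : ℕ, s + b ≤ p →
      (¬ (ν ∣ b) →
        PowerSeries.map
            (MvPolynomial.eval₂Hom (Rat.castHom K) fun k : Fin n => ζ ^ ((k : ℕ) + 1))
            (Ct p s b) = 0) ∧
      ∀ γ : ℕ, b = ν * γ →
        PowerSeries.map
            (MvPolynomial.eval₂Hom (Rat.castHom K) fun k : Fin n => ζ ^ ((k : ℕ) + 1))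
            (Ct p s b)
          = PowerSeries.C ((ct p (s : ℤ) γ : ℚ) : K) * PowerSeries.X ^ γ := by
  have hν0 : 0 < ν := by omega
  suffices H : ∀ b s : ℕ, s + b ≤ p →
      PowerSeries.map
          ((MvPolynomial.eval₂Hom (Rat.castHom K) fun k : Fin n => ζ ^ ((k : ℕ) + 1)) :
            MvPolynomial (Fin n) ℚ →+* K) (Ct p s b) =
        if ν ∣ b then
          PowerSeries.C ((ct p (s : ℤ) (b / ν) : ℚ) : K) * PowerSeries.X ^ (b / ν)
        else 0 by
    intro b s hsb
    constructor
    · intro hnd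
      rw [H b s hsb, if_neg hnd]
    · intro γ hγ
      have hdvd : ν ∣ b := ⟨γ, hγ⟩
      rw [H b s hsb, if_pos hdvd, hγ, Nat.mul_div_cancel_left _ hν0]
  intro b
  induction b using Nat.strong_induction_on with
  | _ b IH =>
    intro s hsb
    rcases Nat.eq_zero_or_pos b with hb0 | hb1
    · subst hb0
      rw [hCt0, if_pos (dvd_zero ν), Nat.zero_div, hct0]
      by_cases hps : p = s
      · rw [if_pos hps, if_pos (by exact_mod_cast hps.symm), map_one]
        simp
      · rw [if_neg hps, if_neg (fun h => hps (by exact_mod_cast h.symm)), map_zero]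
        simp
    · -- inductive step
      have hbp : b ≤ p := by omega
      rw [hCtrec p s b hb1 hsb, map_neg, map_sum]
      have hterm : ∀ b₁ ∈ Finset.range b,
          (PowerSeries.map
            ((MvPolynomial.eval₂Hom (Rat.castHom K) fun k : Fin n => ζ ^ ((k : ℕ) + 1)) :
              MvPolynomial (Fin n) ℚ →+* K))
            (∑ t ∈ Finset.range (p - b₁ + 1), Ct p t b₁ * Cc t (s + b - b₁) (b - b₁)) =
          ∑ t ∈ Finset.range (p - b₁ + 1),
            (if ν ∣ b₁ then
              PowerSeries.C ((ct p (t : ℤ) (b₁ / ν) : ℚ) : K) * PowerSeries.X ^ (b₁ / ν)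
            else 0) *
            (if ν ∣ (b - b₁) then
              PowerSeries.C ((PowerSeries.coeff s (stmtG n r d t ((b - b₁) / ν)) : ℚ) : K) *
                PowerSeries.X ^ ((b - b₁) / ν)
            else 0) := by
        intro b₁ hb₁
        rw [map_sum]
        refine Finset.sum_congr rfl fun t ht => ?_
        rw [map_mul]
        have hb₁lt := Finset.mem_range.mp hb₁
        have htle := Finset.mem_range.mp ht
        have h1 := IH b₁ hb₁lt t (by omega)
        have harg : s + b - b₁ = s + (b - b₁) := by omega
        rw [h1, harg,
          stmt_evCc n r ν hν0 d K ζ hζ R hR Cc hCc t s (b - b₁) (by omega)]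
      rw [Finset.sum_congr rfl hterm]
      by_cases hdvd : ν ∣ b
      · -- divisible case
        obtain ⟨γ, hγ⟩ := hdvd
        have hγν : b / ν = γ := by rw [hγ, Nat.mul_div_cancel_left _ hν0]
        have hγ1 : 1 ≤ γ := by
          rcases Nat.eq_zero_or_pos γ with h | h
          · rw [h, Nat.mul_zero] at hγ; omega
          · exact h
        rw [if_pos ⟨γ, hγ⟩, hγν]
        have hsle : (s : ℤ) ≤ (p : ℤ) - (ν : ℤ) * (γ : ℤ) := by
          have h1 : s + ν * γ ≤ p := hγ ▸ hsb
          have h2 := (Nat.cast_le (α := ℤ)).mpr h1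
          push_cast at h2
          omega
        rw [hctrec p (s : ℤ) γ hγ1 (Int.natCast_nonneg s) hsle]
        -- normal form N
        have hRHS : PowerSeries.C
              ((-∑ β₁ ∈ Finset.range γ, ∑ k ∈ Finset.Icc (0 : ℤ)
                  ((p : ℤ) - (ν : ℤ) * (β₁ : ℤ)),
                ct p k β₁ * ccoef n r d k.toNat (γ - β₁) (s : ℤ) : ℚ) : K) *
              PowerSeries.X ^ γ =
            -∑ β₁ ∈ Finset.range γ, ∑ t ∈ Finset.range (p - ν * β₁ + 1),
              PowerSeries.C ((ct p (t : ℤ) β₁ : ℚ) : K) *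
                PowerSeries.C
                  ((PowerSeries.coeff s (stmtG n r d t (γ - β₁)) : ℚ) : K) *
                PowerSeries.X ^ γ := by
          have hicc : ∀ β₁ ∈ Finset.range γ,
              ∑ k ∈ Finset.Icc (0 : ℤ) ((p : ℤ) - (ν : ℤ) * (β₁ : ℤ)),
                ct p k β₁ * ccoef n r d k.toNat (γ - β₁) (s : ℤ) =
              ∑ t ∈ Finset.range (p - ν * β₁ + 1),
                ct p (t : ℤ) β₁ * PowerSeries.coeff s (stmtG n r d t (γ - β₁)) := by
            intro β₁ hβ₁
            have hβ₁lt := Finset.mem_range.mp hβ₁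
            have hνβ₁ : ν * β₁ ≤ p := by
              have : ν * β₁ < ν * γ := (Nat.mul_lt_mul_left hν0).mpr hβ₁lt
              omega
            have hcast : (p : ℤ) - (ν : ℤ) * (β₁ : ℤ) = ((p - ν * β₁ : ℕ) : ℤ) := by
              push_cast [hνβ₁]
              omega
            rw [hcast, stmt_sum_Icc]
            refine Finset.sum_congr rfl fun t ht => ?_
            rw [Int.toNat_natCast, ccoef_natCast]
          rw [Finset.sum_congr rfl hicc]
          push_cast
          rw [map_neg, map_sum, neg_mul, Finset.sum_mul]
          congr 1
          refine Finset.sum_congr rfl fun β₁ _ => ?_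
          rw [map_sum, Finset.sum_mul]
          refine Finset.sum_congr rfl fun t _ => ?_
          rw [map_mul]
        rw [hRHS]
        -- now transform the LHS
        congr 1
        have hsub : (Finset.range γ).image (fun β₁ => ν * β₁) ⊆ Finset.range b := by
          intro x hx
          simp only [Finset.mem_image, Finset.mem_range] at hx ⊢
          obtain ⟨β₁, hβ₁, rfl⟩ := hx
          calc ν * β₁ < ν * γ := (Nat.mul_lt_mul_left hν0).mpr hβ₁
            _ = b := hγ.symm
        have hvan : ∀ x ∈ Finset.range b, x ∉ (Finset.range γ).image (fun β₁ => ν * β₁) →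
            (∑ t ∈ Finset.range (p - x + 1),
              (if ν ∣ x then
                PowerSeries.C ((ct p (t : ℤ) (x / ν) : ℚ) : K) * PowerSeries.X ^ (x / ν)
              else 0) *
              (if ν ∣ (b - x) then
                PowerSeries.C ((PowerSeries.coeff s (stmtG n r d t ((b - x) / ν)) : ℚ) : K) *
                  PowerSeries.X ^ ((b - x) / ν)
              else 0)) = 0 := by
          intro x hx hnx
          have hxlt := Finset.mem_range.mp hx
          have hnd : ¬ ν ∣ x := by
            intro hdx
            obtain ⟨c, hc⟩ := hdx
            apply hnx
            simp only [Finset.mem_image, Finset.mem_range]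
            refine ⟨c, ?_, hc.symm⟩
            by_contra hcge
            push_neg at hcge
            have : b ≤ x := by
              calc b = ν * γ := hγ
                _ ≤ ν * c := Nat.mul_le_mul_left ν hcge
                _ = x := hc.symm
            omega
          exact Finset.sum_eq_zero fun t _ => by rw [if_neg hnd, zero_mul]
        rw [← Finset.sum_subset hsub (fun x hx hnx => hvan x hx hnx)]
        rw [Finset.sum_image (fun x _ y _ h => Nat.eq_of_mul_eq_mul_left hν0 h)]
        refine Finset.sum_congr rfl fun β₁ hβ₁ => ?_
        have hβ₁lt := Finset.mem_range.mp hβ₁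
        have hd1 : ν ∣ ν * β₁ := ⟨β₁, rfl⟩
        have hsub1 : b - ν * β₁ = ν * (γ - β₁) := by
          rw [hγ, ← Nat.mul_sub]
        have hd2 : ν ∣ (b - ν * β₁) := by rw [hsub1]; exact ⟨γ - β₁, rfl⟩
        have hq1 : ν * β₁ / ν = β₁ := Nat.mul_div_cancel_left _ hν0
        have hq2 : (b - ν * β₁) / ν = γ - β₁ := by
          rw [hsub1, Nat.mul_div_cancel_left _ hν0]
        refine Finset.sum_congr rfl fun t _ => ?_
        rw [if_pos hd1, if_pos hd2, hq1, hq2]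
        have hpow : PowerSeries.X ^ β₁ *
            (PowerSeries.C ((PowerSeries.coeff s (stmtG n r d t (γ - β₁)) : ℚ) : K) *
              PowerSeries.X ^ (γ - β₁)) =
            PowerSeries.C ((PowerSeries.coeff s (stmtG n r d t (γ - β₁)) : ℚ) : K) *
              PowerSeries.X ^ γ := by
          have h3 : β₁ + (γ - β₁) = γ := by omega
          rw [mul_left_comm, ← pow_add, h3]
        rw [mul_assoc, hpow]
        ring
      · rw [if_neg hdvd, neg_eq_zero]
        refine Finset.sum_eq_zero fun b₁ hb₁ => Finset.sum_eq_zero fun t ht => ?_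
        have hle : b₁ ≤ b := le_of_lt (Finset.mem_range.mp hb₁)
        by_cases h1 : ν ∣ b₁
        · have h2 : ¬ ν ∣ (b - b₁) := by
            intro h
            exact hdvd ((Nat.sub_add_cancel hle) ▸ (h.add h1))
          rw [if_neg h2, mul_zero]
        · rw [if_neg h1, zero_mul]
end

section
/- Define U₁(n,𝐝,β) := ∑_{p=0}^{n−1−r} ∑_{β₁+β₂=β, β₁,β₂≥0} c̃_{n−1−r−p, n−1−r−p−νβ₁}^{(β₁)} · c̃_{p, p−νβ₂−1}^{(β₂)}. Then U₁(n,𝐝,1) = −(D/2)·( ( ∑_{i=1}^r (d_i−1)/2 )² − ∑_{i=1}^r (d_i−1)(2d_i−1)/(6 d_i) ). In particular, for r = 1 and 𝐝 = (d): U₁(n,d,1) = −(d−1)(d−2)(3d−1)·d^{d−1}/24. -/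
namespace Stmt18Aux

open Finset Polynomial

noncomputable def czZ (l : ℤ) (f : PowerSeries ℚ) : ℚ :=
  if l < 0 then 0 else PowerSeries.coeff l.toNat f

lemma czZ_neg {l : ℤ} (h : l < 0) (f : PowerSeries ℚ) : czZ l f = 0 := if_pos h

lemma czZ_pascal (l : ℤ) (f : PowerSeries ℚ) :
    czZ l ((PowerSeries.X + 1) * f) = czZ l f + czZ (l - 1) f := by
  rcases lt_trichotomy l 0 with h | h | h
  · rw [czZ_neg h, czZ_neg h, czZ_neg (by omega), add_zero]
  · subst h
    simp [czZ, czZ_neg, PowerSeries.coeff_zero_eq_constantCoeff, map_mul]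
  · have h1 : ¬ l < 0 := by omega
    have h2 : ¬ l - 1 < 0 := by omega
    rw [czZ, if_neg h1, czZ, if_neg h1, czZ, if_neg h2]
    obtain ⟨k, hk⟩ : ∃ k : ℕ, l = (k : ℤ) + 1 := ⟨(l - 1).toNat, by omega⟩
    subst hk
    have : ((k : ℤ) + 1).toNat = k + 1 := by omega
    rw [this]
    have : ((k : ℤ) + 1 - 1).toNat = k := by omega
    rw [this, add_mul, one_mul, map_add, PowerSeries.coeff_succ_X_mul, add_comm]

lemma const_pow_ne (q : ℕ) :
    PowerSeries.constantCoeff (((PowerSeries.X + 1 : PowerSeries ℚ)) ^ q) ≠ 0 := by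
  simp

lemma inv_pow_shift (q : ℕ) :
    (PowerSeries.X + 1) * (((PowerSeries.X + 1) ^ (q + 1) : PowerSeries ℚ))⁻¹
      = (((PowerSeries.X + 1) ^ q : PowerSeries ℚ))⁻¹ := by
  rw [PowerSeries.eq_inv_iff_mul_eq_one (const_pow_ne q)]
  have : (PowerSeries.X + 1) * (((PowerSeries.X + 1) ^ (q + 1) : PowerSeries ℚ))⁻¹ *
      (PowerSeries.X + 1) ^ q
      = ((PowerSeries.X + 1) ^ (q+1) : PowerSeries ℚ) * (((PowerSeries.X + 1) ^ (q + 1) : PowerSeries ℚ))⁻¹ := by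
    ring
  rw [this, PowerSeries.mul_inv_cancel _ (const_pow_ne (q+1))]

lemma pow_mul_inv_pow (p n : ℕ) (h : p ≤ n) :
    (PowerSeries.X + 1) ^ p * (((PowerSeries.X + 1) ^ n : PowerSeries ℚ))⁻¹
      = (((PowerSeries.X + 1) ^ (n - p) : PowerSeries ℚ))⁻¹ := by
  rw [PowerSeries.eq_inv_iff_mul_eq_one (const_pow_ne (n - p))]
  have : (PowerSeries.X + 1) ^ p * (((PowerSeries.X + 1) ^ n : PowerSeries ℚ))⁻¹ *
      (PowerSeries.X + 1) ^ (n - p)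
      = ((PowerSeries.X + 1) ^ n : PowerSeries ℚ) * (((PowerSeries.X + 1) ^ n : PowerSeries ℚ))⁻¹ := by
    rw [mul_comm, ← mul_assoc, ← pow_add]
    congr 2
    omega
  rw [this, PowerSeries.mul_inv_cancel _ (const_pow_ne n)]

noncomputable def Fps (r : ℕ) (d : Fin r → ℕ) : PowerSeries ℚ :=
  ∏ k : Fin r, ∏ i ∈ Finset.range (d k),
    ((d k : PowerSeries ℚ) * PowerSeries.X + ((i + 1 : ℕ) : PowerSeries ℚ))

noncomputable def Fps' (r : ℕ) (d : Fin r → ℕ) : PowerSeries ℚ :=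
  ∏ k : Fin r, ∏ i ∈ Finset.range (d k - 1),
    ((d k : PowerSeries ℚ) * PowerSeries.X + ((i + 1 : ℕ) : PowerSeries ℚ))

lemma ccoef_one (n r : ℕ) (d : Fin r → ℕ) (p : ℕ) (l : ℤ) :
    ccoef n r d p 1 l
      = czZ l (((PowerSeries.X + 1) ^ p * Fps r d) *
          (((PowerSeries.X + 1) ^ n : PowerSeries ℚ))⁻¹) := by
  unfold ccoef czZ Fps
  simp

lemma telescope (n r m ν : ℕ) (d : Fin r → ℕ) (hν : ν = n - m) (hmn : m < n) (hrm : r ≤ m) :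
    ∑ p ∈ Finset.range (n - r),
        czZ ((p : ℤ) - ν - 1) (((PowerSeries.X + 1) ^ p * Fps r d) *
          (((PowerSeries.X + 1) ^ n : PowerSeries ℚ))⁻¹)
      = czZ ((m : ℤ) - r - 2) (Fps r d * (((PowerSeries.X + 1) ^ r : PowerSeries ℚ))⁻¹) := by
  set Rf : ℕ → ℚ := fun p =>
    czZ ((p : ℤ) - ν - 2) (Fps r d * (((PowerSeries.X + 1) ^ (n - p) : PowerSeries ℚ))⁻¹) with hRf
  have key : ∀ p ∈ Finset.range (n - r),
      czZ ((p : ℤ) - ν - 1) (((PowerSeries.X + 1) ^ p * Fps r d) *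
          (((PowerSeries.X + 1) ^ n : PowerSeries ℚ))⁻¹) = Rf (p + 1) - Rf p := by
    intro p hp
    rw [Finset.mem_range] at hp
    have hpn : p ≤ n := by omega
    have h1 : ((PowerSeries.X + 1) ^ p * Fps r d) *
          (((PowerSeries.X + 1) ^ n : PowerSeries ℚ))⁻¹
        = Fps r d * (((PowerSeries.X + 1) ^ (n - p) : PowerSeries ℚ))⁻¹ := by
      rw [mul_right_comm, pow_mul_inv_pow p n hpn, mul_comm]
    have h2 : Rf (p + 1)
        = czZ ((p : ℤ) - ν - 1)
            ((PowerSeries.X + 1) * (Fps r d * (((PowerSeries.X + 1) ^ (n - p) : PowerSeries ℚ))⁻¹)) := by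
      simp only [hRf]
      have hcast : ((p + 1 : ℕ) : ℤ) - ν - 2 = (p : ℤ) - ν - 1 := by push_cast; ring
      rw [hcast]
      congr 1
      have hnp : n - p = (n - (p + 1)) + 1 := by omega
      rw [hnp, ← inv_pow_shift (n - (p + 1))]
      ring
    rw [h1, h2, czZ_pascal]
    have : (p : ℤ) - ν - 1 - 1 = (p : ℤ) - ν - 2 := by ring
    rw [this]
    ring
  rw [Finset.sum_congr rfl key, Finset.sum_range_sub Rf]
  have hRf0 : Rf 0 = 0 := by
    simp only [hRf]
    exact czZ_neg (by push_cast; omega) _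
  have hRfn : Rf (n - r) = czZ ((m : ℤ) - r - 2)
      (Fps r d * (((PowerSeries.X + 1) ^ r : PowerSeries ℚ))⁻¹) := by
    simp only [hRf]
    have h3 : n - (n - r) = r := by omega
    have h4 : ((n - r : ℕ) : ℤ) - ν - 2 = (m : ℤ) - r - 2 := by omega
    rw [h3, h4]
  rw [hRf0, hRfn, sub_zero]

lemma Fps_factor (r : ℕ) (d : Fin r → ℕ) (hd : ∀ k, 2 ≤ d k) :
    Fps r d = Fps' r d * (((∏ k, d k : ℕ) : PowerSeries ℚ) * (PowerSeries.X + 1) ^ r) := by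
  unfold Fps Fps'
  have step : ∀ k : Fin r,
      (∏ i ∈ Finset.range (d k),
        ((d k : PowerSeries ℚ) * PowerSeries.X + ((i + 1 : ℕ) : PowerSeries ℚ)))
      = (∏ i ∈ Finset.range (d k - 1),
          ((d k : PowerSeries ℚ) * PowerSeries.X + ((i + 1 : ℕ) : PowerSeries ℚ)))
        * ((d k : PowerSeries ℚ) * (PowerSeries.X + 1)) := by
    intro k
    have h : d k = (d k - 1) + 1 := by have := hd k; omega
    rw [h, Finset.prod_range_succ, ← h]
    congr 1
    ring
  rw [Finset.prod_congr rfl (fun k _ => step k), Finset.prod_mul_distrib,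
    Finset.prod_mul_distrib]
  push_cast
  rw [Finset.prod_const]
  simp [Finset.card_univ]

lemma coeff1_mul (p q : ℚ[X]) :
    (p * q).coeff 1 = p.coeff 0 * q.coeff 1 + p.coeff 1 * q.coeff 0 := by
  rw [Polynomial.coeff_mul, Finset.Nat.sum_antidiagonal_eq_sum_range_succ_mk]
  simp [Finset.sum_range_succ]

lemma coeff2_mul (p q : ℚ[X]) :
    (p * q).coeff 2 = p.coeff 0 * q.coeff 2 + p.coeff 1 * q.coeff 1 + p.coeff 2 * q.coeff 0 := by
  rw [Polynomial.coeff_mul, Finset.Nat.sum_antidiagonal_eq_sum_range_succ_mk]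
  simp [Finset.sum_range_succ]

lemma coeff0_prod {ι : Type*} (s : Finset ι) (f : ι → ℚ[X]) :
    (∏ i ∈ s, f i).coeff 0 = ∏ i ∈ s, (f i).coeff 0 := by
  simp [Polynomial.coeff_zero_eq_eval_zero, Polynomial.eval_prod]

noncomputable def L1 (p : ℚ[X]) : ℚ := p.coeff 1 / p.coeff 0
noncomputable def Kf (p : ℚ[X]) : ℚ := (p.coeff 1 / p.coeff 0) ^ 2 - 2 * (p.coeff 2 / p.coeff 0)

lemma L1_mul {p q : ℚ[X]} (hp : p.coeff 0 ≠ 0) (hq : q.coeff 0 ≠ 0) :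
    L1 (p * q) = L1 p + L1 q := by
  unfold L1
  rw [coeff1_mul, Polynomial.mul_coeff_zero]
  field_simp
  ring

lemma Kf_mul {p q : ℚ[X]} (hp : p.coeff 0 ≠ 0) (hq : q.coeff 0 ≠ 0) :
    Kf (p * q) = Kf p + Kf q := by
  unfold Kf
  rw [coeff1_mul, coeff2_mul, Polynomial.mul_coeff_zero]
  field_simp
  ring

lemma L1_prod {ι : Type*} (s : Finset ι) (f : ι → ℚ[X]) (h : ∀ i ∈ s, (f i).coeff 0 ≠ 0) :
    L1 (∏ i ∈ s, f i) = ∑ i ∈ s, L1 (f i) := by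
  induction s using Finset.cons_induction with
  | empty => simp [L1, Polynomial.coeff_one]
  | cons a s ha ih =>
    rw [Finset.prod_cons, Finset.sum_cons,
      L1_mul (h a (Finset.mem_cons_self a s)) ?_, ih (fun i hi => h i (Finset.mem_cons_of_mem hi))]
    rw [coeff0_prod]
    exact Finset.prod_ne_zero_iff.mpr (fun i hi => h i (Finset.mem_cons_of_mem hi))

lemma Kf_prod {ι : Type*} (s : Finset ι) (f : ι → ℚ[X]) (h : ∀ i ∈ s, (f i).coeff 0 ≠ 0) :
    Kf (∏ i ∈ s, f i) = ∑ i ∈ s, Kf (f i) := by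
  induction s using Finset.cons_induction with
  | empty => simp [Kf, Polynomial.coeff_one]
  | cons a s ha ih =>
    rw [Finset.prod_cons, Finset.sum_cons,
      Kf_mul (h a (Finset.mem_cons_self a s)) ?_, ih (fun i hi => h i (Finset.mem_cons_of_mem hi))]
    rw [coeff0_prod]
    exact Finset.prod_ne_zero_iff.mpr (fun i hi => h i (Finset.mem_cons_of_mem hi))

lemma coeff2_eq (p : ℚ[X]) (hp : p.coeff 0 ≠ 0) :
    p.coeff 2 = p.coeff 0 * ((L1 p) ^ 2 - Kf p) / 2 := by
  unfold L1 Kf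
  field_simp
  ring

lemma lin_ne_zero {a b : ℚ} (ha : a ≠ 0) : C a * X + C b ≠ 0 := fun h => by
  have := congrArg (fun p => Polynomial.coeff p 1) h
  simp at this
  exact ha this

lemma reverse_linear {a b : ℚ} (ha : a ≠ 0) :
    (C a * X + C b).reverse = C b * X + C a := by
  unfold Polynomial.reverse
  rw [natDegree_linear ha]
  have h1 : (C a * X + C b : ℚ[X]) = C a * X ^ 1 + C b * X ^ 0 := by ring
  rw [h1, Polynomial.reflect_add, Polynomial.reflect_C_mul_X_pow, Polynomial.reflect_C_mul_X_pow]
  norm_num [Polynomial.revAt_le]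
  ring

lemma reverse_prod {ι : Type*} (s : Finset ι) (f : ι → ℚ[X]) :
    (∏ i ∈ s, f i).reverse = ∏ i ∈ s, (f i).reverse := by
  induction s using Finset.cons_induction with
  | empty =>
    rw [Finset.prod_empty, Finset.prod_empty, show (1:ℚ[X]) = C 1 from (Polynomial.C_1).symm,
      Polynomial.reverse_C]
  | cons a s ha ih => rw [Finset.prod_cons, Finset.prod_cons, Polynomial.reverse_mul_of_domain, ih]

lemma sum1 (M : ℕ) : ∑ i ∈ Finset.range M, ((i : ℚ) + 1) = M * (M + 1) / 2 := by
  induction M with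
  | zero => simp
  | succ M ih => rw [Finset.sum_range_succ, ih]; push_cast; ring

lemma sum2 (M : ℕ) : ∑ i ∈ Finset.range M, ((i : ℚ) + 1) ^ 2
    = (M : ℚ) * ((M : ℚ) + 1) * (2 * (M : ℚ) + 1) / 6 := by
  induction M with
  | zero => simp
  | succ M ih => rw [Finset.sum_range_succ, ih]; push_cast; ring

noncomputable def Fpoly (r : ℕ) (d : Fin r → ℕ) : Polynomial ℚ :=
  ∏ k : Fin r, ∏ i ∈ Finset.range (d k - 1),
    (Polynomial.C (d k : ℚ) * Polynomial.X + Polynomial.C ((i + 1 : ℕ) : ℚ))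

noncomputable def Gpoly (r : ℕ) (d : Fin r → ℕ) : Polynomial ℚ :=
  ∏ k : Fin r, ∏ i ∈ Finset.range (d k - 1),
    (Polynomial.C ((i + 1 : ℕ) : ℚ) * Polynomial.X + Polynomial.C (d k : ℚ))

lemma coe_Fpoly (r : ℕ) (d : Fin r → ℕ) :
    ((Fpoly r d : Polynomial ℚ) : PowerSeries ℚ) = Fps' r d := by
  unfold Fpoly Fps'
  rw [← Polynomial.coeToPowerSeries.ringHom_apply, map_prod]
  refine Finset.prod_congr rfl fun k _ => ?_
  rw [map_prod]
  refine Finset.prod_congr rfl fun i _ => ?_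
  rw [Polynomial.coeToPowerSeries.ringHom_apply]
  push_cast
  simp only [Polynomial.coe_add, Polynomial.coe_mul, Polynomial.coe_C, Polynomial.coe_X,
    map_natCast, map_one, map_add]

section

variable (r : ℕ) (d : Fin r → ℕ) (hd : ∀ k, 2 ≤ d k)

lemma fac_coeff0 (k : Fin r) (i : ℕ) :
    (Polynomial.C ((i + 1 : ℕ) : ℚ) * Polynomial.X + Polynomial.C (d k : ℚ)).coeff 0
      = (d k : ℚ) := by
  simp

lemma fac_coeff1 (k : Fin r) (i : ℕ) :
    (Polynomial.C ((i + 1 : ℕ) : ℚ) * Polynomial.X + Polynomial.C (d k : ℚ)).coeff 1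
      = ((i + 1 : ℕ) : ℚ) := by
  simp

lemma fac_coeff2 (k : Fin r) (i : ℕ) :
    (Polynomial.C ((i + 1 : ℕ) : ℚ) * Polynomial.X + Polynomial.C (d k : ℚ)).coeff 2 = 0 := by
  simp [Polynomial.coeff_C, Polynomial.coeff_one]

include hd

lemma dkQ_ne (k : Fin r) : (d k : ℚ) ≠ 0 := by
  have := hd k; positivity

lemma inner_coeff0_ne (k : Fin r) :
    (∏ i ∈ Finset.range (d k - 1),
      (Polynomial.C ((i + 1 : ℕ) : ℚ) * Polynomial.X + Polynomial.C (d k : ℚ))).coeff 0 ≠ 0 := by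
  rw [coeff0_prod]
  refine Finset.prod_ne_zero_iff.mpr fun i _ => ?_
  rw [fac_coeff0]
  exact dkQ_ne r d hd k

lemma Gcoeff0 : (Gpoly r d).coeff 0 = ∏ k, (d k : ℚ) ^ (d k - 1) := by
  unfold Gpoly
  rw [coeff0_prod]
  refine Finset.prod_congr rfl fun k _ => ?_
  rw [coeff0_prod]
  simp

lemma castdk (k : Fin r) : ((d k - 1 : ℕ) : ℚ) = (d k : ℚ) - 1 := by
  have := hd k
  push_cast [Nat.cast_sub (by omega : 1 ≤ d k)]
  ring

lemma GL1 : L1 (Gpoly r d) = ∑ k, ((d k : ℚ) - 1) / 2 := by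
  unfold Gpoly
  rw [L1_prod _ _ (fun k _ => inner_coeff0_ne r d hd k)]
  refine Finset.sum_congr rfl fun k _ => ?_
  rw [L1_prod _ _ (fun i _ => by rw [fac_coeff0]; exact dkQ_ne r d hd k)]
  have : ∀ i ∈ Finset.range (d k - 1),
      L1 (Polynomial.C ((i + 1 : ℕ) : ℚ) * Polynomial.X + Polynomial.C (d k : ℚ))
        = ((i : ℚ) + 1) / (d k : ℚ) := by
    intro i _
    unfold L1
    rw [fac_coeff0, fac_coeff1]
    push_cast
    ring
  rw [Finset.sum_congr rfl this, ← Finset.sum_div, sum1, castdk r d hd]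
  have hdk := dkQ_ne r d hd k
  field_simp
  ring

lemma GKf : Kf (Gpoly r d) = ∑ k, ((d k : ℚ) - 1) * (2 * (d k : ℚ) - 1) / (6 * (d k : ℚ)) := by
  unfold Gpoly
  rw [Kf_prod _ _ (fun k _ => inner_coeff0_ne r d hd k)]
  refine Finset.sum_congr rfl fun k _ => ?_
  rw [Kf_prod _ _ (fun i _ => by rw [fac_coeff0]; exact dkQ_ne r d hd k)]
  have : ∀ i ∈ Finset.range (d k - 1),
      Kf (Polynomial.C ((i + 1 : ℕ) : ℚ) * Polynomial.X + Polynomial.C (d k : ℚ))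
        = ((i : ℚ) + 1) ^ 2 / ((d k : ℚ)) ^ 2 := by
    intro i _
    unfold Kf
    rw [fac_coeff0, fac_coeff1, fac_coeff2 r d]
    push_cast
    ring
  rw [Finset.sum_congr rfl this, ← Finset.sum_div, sum2, castdk r d hd]
  have hdk := dkQ_ne r d hd k
  field_simp
  ring

lemma Gcoeff2 : (Gpoly r d).coeff 2
    = (∏ k, (d k : ℚ) ^ (d k - 1)) *
        ((∑ k, ((d k : ℚ) - 1) / 2) ^ 2
          - ∑ k, ((d k : ℚ) - 1) * (2 * (d k : ℚ) - 1) / (6 * (d k : ℚ))) / 2 := by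
  have h0 : (Gpoly r d).coeff 0 ≠ 0 := by
    rw [Gcoeff0 r d hd]
    exact Finset.prod_ne_zero_iff.mpr fun k _ => pow_ne_zero _ (dkQ_ne r d hd k)
  rw [coeff2_eq _ h0, Gcoeff0 r d hd, GL1 r d hd, GKf r d hd]

lemma Fpoly_natDegree : (Fpoly r d).natDegree = ∑ k, (d k - 1) := by
  unfold Fpoly
  rw [Polynomial.natDegree_prod _ _ (fun k _ => Finset.prod_ne_zero_iff.mpr
    (fun i _ => lin_ne_zero (dkQ_ne r d hd k)))]
  refine Finset.sum_congr rfl fun k _ => ?_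
  rw [Polynomial.natDegree_prod _ _ (fun i _ => lin_ne_zero (dkQ_ne r d hd k))]
  rw [Finset.sum_congr rfl fun i _ => Polynomial.natDegree_linear (dkQ_ne r d hd k)]
  simp

lemma Fpoly_reverse : (Fpoly r d).reverse = Gpoly r d := by
  unfold Fpoly Gpoly
  rw [reverse_prod]
  refine Finset.prod_congr rfl fun k _ => ?_
  rw [reverse_prod]
  exact Finset.prod_congr rfl fun i _ => reverse_linear (dkQ_ne r d hd k)

lemma master (hr : 1 ≤ r) (m D : ℕ) (hm : m = ∑ k, d k) (hD : D = ∏ k, d k ^ d k) :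
    czZ ((m : ℤ) - r - 2) (Fps r d * (((PowerSeries.X + 1) ^ r : PowerSeries ℚ))⁻¹)
      = (D : ℚ) / 2 *
          ((∑ i : Fin r, ((d i : ℚ) - 1) / 2) ^ 2
            - ∑ i : Fin r, ((d i : ℚ) - 1) * (2 * (d i : ℚ) - 1) / (6 * (d i : ℚ))) := by
  have hcancel : Fps r d * (((PowerSeries.X + 1) ^ r : PowerSeries ℚ))⁻¹
      = ((∏ k, d k : ℕ) : PowerSeries ℚ) * Fps' r d := by
    rw [Fps_factor r d hd, mul_assoc, mul_assoc,
      PowerSeries.mul_inv_cancel _ (const_pow_ne r), mul_one, mul_comm]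
  rw [hcancel]
  have h2r : 2 * r ≤ m := by
    rw [hm]
    calc 2 * r = ∑ _k : Fin r, 2 := by simp [Finset.sum_const, mul_comm]
    _ ≤ ∑ k, d k := Finset.sum_le_sum fun k _ => hd k
  by_cases hneg : (m : ℤ) - r - 2 < 0
  · rw [czZ_neg hneg]
    have hr1 : r = 1 := by omega
    subst hr1
    have hm1 : m = d 0 := by rw [hm]; exact Fin.sum_univ_one _
    have hd0 : d 0 = 2 := by have := hd 0; omega
    rw [Fin.sum_univ_one, Fin.sum_univ_one, hd0]
    norm_num
  · push_neg at hneg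
    have hM : 2 ≤ ∑ k, (d k - 1) ∧ ((m : ℤ) - r - 2).toNat = (∑ k, (d k - 1)) - 2 := by
      have : (m : ℤ) = r + ∑ k, ((d k : ℤ) - 1) := by
        rw [hm]
        push_cast
        rw [Finset.sum_sub_distrib]
        simp [Finset.sum_const, mul_comm]
      have hcast : ((∑ k, (d k - 1) : ℕ) : ℤ) = ∑ k, ((d k : ℤ) - 1) := by
        push_cast
        refine Finset.sum_congr rfl fun k _ => ?_
        have := hd k
        omega
      omega
    obtain ⟨hM2, hMtoNat⟩ := hM
    rw [czZ, if_neg (by omega), hMtoNat]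
    have hCc : ((∏ k, d k : ℕ) : PowerSeries ℚ) = PowerSeries.C ((∏ k, d k : ℕ) : ℚ) := by
      rw [map_natCast]
    rw [hCc, PowerSeries.coeff_C_mul, ← coe_Fpoly, Polynomial.coeff_coe]
    have hrev : (Fpoly r d).coeff (∑ k, (d k - 1) - 2) = ((Fpoly r d).reverse).coeff 2 := by
      rw [Polynomial.coeff_reverse, Fpoly_natDegree r d hd, Polynomial.revAt_le hM2]
    rw [hrev, Fpoly_reverse r d hd, Gcoeff2 r d hd]
    have hDprod : ((∏ k, d k : ℕ) : ℚ) * (∏ k, (d k : ℚ) ^ (d k - 1)) = (D : ℚ) := by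
      rw [hD]
      push_cast
      rw [← Finset.prod_mul_distrib]
      refine Finset.prod_congr rfl fun k _ => ?_
      rw [← pow_succ']
      congr 1
      have := hd k
      omega
    rw [← hDprod]
    ring

end

end Stmt18Aux

theorem stmt18 (n r : ℕ) (hr : 1 ≤ r) (d : Fin r → ℕ) (hd : ∀ k, 2 ≤ d k)
    (m D : ℕ) (hm : m = ∑ k, d k) (hD : D = ∏ k, d k ^ d k)
    (ν : ℕ) (hν : ν = n - m) (hmn : m < n)
    -- the coefficients c̃_{p,l}^{(β)}
    (ct : ℕ → ℤ → ℕ → ℚ)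
    (hct0 : ∀ (p : ℕ) (l : ℤ), ct p l 0 = if l = (p : ℤ) then 1 else 0)
    (hctz : ∀ (p : ℕ) (l : ℤ) (β : ℕ),
      (l < 0 ∨ (p : ℤ) - (ν : ℤ) * (β : ℤ) < l) → ct p l β = 0)
    (hctrec : ∀ (p : ℕ) (l : ℤ) (β : ℕ), 1 ≤ β → 0 ≤ l → l ≤ (p : ℤ) - (ν : ℤ) * (β : ℤ) →
      ct p l β = -∑ β₁ ∈ Finset.range β, ∑ k ∈ Finset.Icc (0 : ℤ) ((p : ℤ) - (ν : ℤ) * (β₁ : ℤ)),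
        ct p k β₁ * ccoef n r d k.toNat (β - β₁) l)
    :
    -- U₁(n,𝐝,1)
    (∑ p ∈ Finset.range (n - r), ∑ β₁ ∈ Finset.range 2,
        ct (n - 1 - r - p) (((n - 1 - r - p : ℕ) : ℤ) - (ν : ℤ) * (β₁ : ℤ)) β₁ *
          ct p ((p : ℤ) - (ν : ℤ) * ((1 - β₁ : ℕ) : ℤ) - 1) (1 - β₁))
      = -((D : ℚ) / 2) *
          ((∑ i : Fin r, ((d i : ℚ) - 1) / 2) ^ 2
            - ∑ i : Fin r, ((d i : ℚ) - 1) * (2 * (d i : ℚ) - 1) / (6 * (d i : ℚ)))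
    ∧ (r = 1 →
      (∑ p ∈ Finset.range (n - r), ∑ β₁ ∈ Finset.range 2,
          ct (n - 1 - r - p) (((n - 1 - r - p : ℕ) : ℤ) - (ν : ℤ) * (β₁ : ℤ)) β₁ *
            ct p ((p : ℤ) - (ν : ℤ) * ((1 - β₁ : ℕ) : ℤ) - 1) (1 - β₁))
        = -((((d ⟨0, hr⟩ : ℚ) - 1) * ((d ⟨0, hr⟩ : ℚ) - 2) * (3 * (d ⟨0, hr⟩ : ℚ) - 1) *
              ((d ⟨0, hr⟩ : ℚ)) ^ (d ⟨0, hr⟩ - 1)) / 24)) := by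
  classical
  have hrm : r ≤ m := by
    have h2r : 2 * r ≤ m := by
      rw [hm]
      calc 2 * r = ∑ _k : Fin r, 2 := by simp [Finset.sum_const, mul_comm]
      _ ≤ ∑ k, d k := Finset.sum_le_sum fun k _ => hd k
    omega
  have hsum : ∀ p ∈ Finset.range (n - r),
      (∑ β₁ ∈ Finset.range 2,
        ct (n - 1 - r - p) (((n - 1 - r - p : ℕ) : ℤ) - (ν : ℤ) * (β₁ : ℤ)) β₁ *
          ct p ((p : ℤ) - (ν : ℤ) * ((1 - β₁ : ℕ) : ℤ) - 1) (1 - β₁))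
        = -(Stmt18Aux.czZ ((p : ℤ) - ν - 1)
            (((PowerSeries.X + 1) ^ p * Stmt18Aux.Fps r d) *
              (((PowerSeries.X + 1) ^ n : PowerSeries ℚ))⁻¹)) := by
    intro p hp
    rw [Finset.sum_range_succ, Finset.sum_range_one]
    have hz : ct p ((p : ℤ) - (ν : ℤ) * (((1 : ℕ) - (1 : ℕ) : ℕ) : ℤ) - 1) (1 - 1) = 0 := by
      norm_num
      rw [hct0]
      rw [if_neg (by omega)]
    rw [hz, mul_zero, add_zero]
    have h1 : ct (n - 1 - r - p)
        (((n - 1 - r - p : ℕ) : ℤ) - (ν : ℤ) * (((0 : ℕ) : ℤ))) 0 = 1 := by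
      rw [hct0]
      rw [if_pos (by push_cast; ring)]
    rw [h1, one_mul]
    have h2 : ((1 : ℕ) - (0 : ℕ) : ℕ) = 1 := rfl
    rw [h2]
    have hct1 : ct p ((p : ℤ) - (ν : ℤ) * ((1 : ℕ) : ℤ) - 1) 1
        = -(ccoef n r d p 1 ((p : ℤ) - ν - 1)) := by
      have hl : (p : ℤ) - (ν : ℤ) * ((1 : ℕ) : ℤ) - 1 = (p : ℤ) - ν - 1 := by push_cast; ring
      rw [hl]
      by_cases hneg : (p : ℤ) - ν - 1 < 0
      · rw [hctz p _ 1 (Or.inl hneg), ccoef, if_pos hneg, neg_zero]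
      · push_neg at hneg
        rw [hctrec p _ 1 le_rfl hneg (by push_cast; omega)]
        rw [Finset.sum_range_one]
        congr 1
        have hterm : ∀ k ∈ Finset.Icc (0 : ℤ) ((p : ℤ) - (ν : ℤ) * ((0 : ℕ) : ℤ)),
            ct p k 0 * ccoef n r d k.toNat (1 - 0) ((p : ℤ) - ν - 1)
              = if k = (p : ℤ) then ccoef n r d k.toNat 1 ((p : ℤ) - ν - 1) else 0 := by
          intro k _
          rw [hct0]
          split_ifs <;> simp
        rw [Finset.sum_congr rfl hterm, Finset.sum_ite_eq' _ ((p : ℤ))]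
        rw [if_pos (by simp)]
        simp
    rw [hct1, Stmt18Aux.ccoef_one]
  have hfirst : (∑ p ∈ Finset.range (n - r), ∑ β₁ ∈ Finset.range 2,
        ct (n - 1 - r - p) (((n - 1 - r - p : ℕ) : ℤ) - (ν : ℤ) * (β₁ : ℤ)) β₁ *
          ct p ((p : ℤ) - (ν : ℤ) * ((1 - β₁ : ℕ) : ℤ) - 1) (1 - β₁))
      = -((D : ℚ) / 2) *
          ((∑ i : Fin r, ((d i : ℚ) - 1) / 2) ^ 2
            - ∑ i : Fin r, ((d i : ℚ) - 1) * (2 * (d i : ℚ) - 1) / (6 * (d i : ℚ))) := by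
    rw [Finset.sum_congr rfl hsum, Finset.sum_neg_distrib,
      Stmt18Aux.telescope n r m ν d hν hmn hrm,
      Stmt18Aux.master r d hd hr m D hm hD]
    ring
  refine ⟨hfirst, fun hr1 => ?_⟩
  rw [hfirst]
  subst hr1
  have hzero : (⟨0, hr⟩ : Fin 1) = 0 := rfl
  rw [hzero, Fin.sum_univ_one, Fin.sum_univ_one]
  have hD1 : (D : ℚ) = (d 0 : ℚ) ^ (d 0) := by
    rw [hD, Fin.prod_univ_one]
    push_cast
    ring
  have hd0 : (d 0 : ℚ) ≠ 0 := by
    have := hd 0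
    positivity
  have hpow : (d 0 : ℚ) ^ (d 0) = (d 0 : ℚ) ^ (d 0 - 1) * (d 0 : ℚ) := by
    rw [← pow_succ]
    congr 1
    have := hd 0
    omega
  rw [hD1, hpow]
  field_simp
  ring
end
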